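/- arXiv:2301.01676 — 4 statements merged into one kernel-verified Lean document; each statement's English description precedes it below -/
import Mathlib

section
/- Let Γ be a homogeneous non-commutative arithmetic circuit with s non-scalar multiplication gates, and let ℓ ≥ 2. Then the dimension of the F-span of the set {f^J : f computed by some gate of Γ, J an interval of length ℓ in [deg f]} is at most (ℓ−1)·s. -/
/-- Non-commutative polynomials in `n` variables over `F`. -/
abbrev NCPoly (F : Type) [CommSemiring F] (n : ℕ) : Type :=
  MonoidAlgebra F (FreeMonoid (Fin n))

/-- The variable `x_i` as a non-commutative polynomial. -/
noncomputable def NCvar {F : Type} [CommSemiring F] {n : ℕ} (i : Fin n) : NCPoly F n :=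
  MonoidAlgebra.of F (FreeMonoid (Fin n)) (FreeMonoid.of i)

/-- The monomial given by a word (list of variable indices). -/
noncomputable def NCword {F : Type} [CommSemiring F] {n : ℕ} (w : List (Fin n)) : NCPoly F n :=
  MonoidAlgebra.single (FreeMonoid.ofList w) 1

/-- `f` is homogeneous of degree `d`. -/
def IsHomog {F : Type} [CommSemiring F] {n : ℕ} (d : ℕ) (f : NCPoly F n) : Prop :=
  ∀ w ∈ f.coeff.support, (FreeMonoid.toList w).length = d

/-- Restriction `f^J` for the interval `J = [a,b]` (1-indexed positions):
linear extension of `x_{j_1}⋯x_{j_d} ↦ x_{j_a}⋯x_{j_b}`. -/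
noncomputable def NCrestrict {F : Type} [CommSemiring F] {n : ℕ} (a b : ℕ)
    (f : NCPoly F n) : NCPoly F n :=
  MonoidAlgebra.ofCoeff (Finsupp.mapDomain
    (fun w => FreeMonoid.ofList (((FreeMonoid.toList w).drop (a - 1)).take (b + 1 - a))) f.coeff)

/-- Sum of coefficients of `f` (i.e. `f^∅`, all variables set to 1). -/
noncomputable def coeffSum {F : Type} [CommSemiring F] {n : ℕ} (f : NCPoly F n) : F :=
  Finsupp.sum f.coeff (fun _ c => c)

/-- A gate operation; children point to earlier gates (indices `< k`). -/
inductive GateOp (F : Type) (n k : ℕ) where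
  | var : Fin n → GateOp F n k
  | const : F → GateOp F n k
  | add : Fin k → Fin k → GateOp F n k
  | mul : Fin k → Fin k → GateOp F n k

/-- A non-commutative arithmetic circuit: gates in topological order. -/
structure NCCircuit (F : Type) (n : ℕ) where
  gates : ℕ
  gate : (i : Fin gates) → GateOp F n i.val

namespace NCCircuit

variable {F : Type} [CommSemiring F] {n : ℕ}

/-- The polynomial computed at gate `i`. -/
noncomputable def evalAux (c : NCCircuit F n) : (i : ℕ) → i < c.gates → NCPoly F n
  | i, h =>
    match c.gate ⟨i, h⟩ with
    | .var v => NCvar v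
    | .const a => algebraMap F (NCPoly F n) a
    | .add a b => c.evalAux a.val (a.isLt.trans h) + c.evalAux b.val (b.isLt.trans h)
    | .mul a b => c.evalAux a.val (a.isLt.trans h) * c.evalAux b.val (b.isLt.trans h)
  termination_by i _ => i

noncomputable def eval (c : NCCircuit F n) (i : Fin c.gates) : NCPoly F n :=
  c.evalAux i.val i.isLt

/-- `c` computes `f` if some gate computes `f`. -/
def Computes (c : NCCircuit F n) (f : NCPoly F n) : Prop := ∃ i, c.eval i = f

/-- Every gate computes a homogeneous polynomial. -/
def Homogeneous (c : NCCircuit F n) : Prop := ∀ i, ∃ d, IsHomog d (c.eval i)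

/-- `f` is a constant (scalar) polynomial. -/
def IsConstPoly (f : NCPoly F n) : Prop := ∃ a : F, f = algebraMap F (NCPoly F n) a

/-- Size: the number of non-input gates. -/
noncomputable def size (c : NCCircuit F n) : ℕ :=
  {i : Fin c.gates |
    (∃ a b, c.gate i = GateOp.add a b) ∨ (∃ a b, c.gate i = GateOp.mul a b)}.ncard

/-- Non-scalar size: the number of product gates both of whose inputs are non-constant. -/
noncomputable def nonScalarSize (c : NCCircuit F n) : ℕ :=
  {i : Fin c.gates | ∃ a b, c.gate i = GateOp.mul a b ∧
      ¬ IsConstPoly (c.evalAux a.val (a.isLt.trans i.isLt)) ∧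
      ¬ IsConstPoly (c.evalAux b.val (b.isLt.trans i.isLt))}.ncard

/-- A circuit using only variable inputs and product gates. -/
def MulOnly (c : NCCircuit F n) : Prop :=
  ∀ i, (∃ v, c.gate i = GateOp.var v) ∨ (∃ a b, c.gate i = GateOp.mul a b)

end NCCircuit

/-- Left partial derivative `∂_x f`. -/
noncomputable def leftDeriv {F : Type} [CommSemiring F] {n : ℕ} (x : Fin n)
    (f : NCPoly F n) : NCPoly F n :=
  Finsupp.sum f.coeff (fun w c =>
    if (FreeMonoid.toList w).head? = some x then
      MonoidAlgebra.single (FreeMonoid.ofList (FreeMonoid.toList w).tail) c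
    else 0)

/-- `E_{⋅}^k` over the variables `x_j` with `j ≥ i` (0-indexed): the ordered
symmetric polynomial `Σ_{i ≤ j_1 < ⋯ < j_k} x_{j_1}⋯x_{j_k}`. -/
noncomputable def esymAbove (F : Type) [CommSemiring F] (n i k : ℕ) : NCPoly F n :=
  ∑ s ∈ ((Finset.univ : Finset (Fin n)).filter (fun j => i ≤ j.val)).powersetCard k,
    MonoidAlgebra.single (FreeMonoid.ofList (s.sort (· ≤ ·))) 1

/-- The ordered symmetric polynomial `E_n^d`. -/
noncomputable def esym (F : Type) [CommSemiring F] (n d : ℕ) : NCPoly F n :=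
  esymAbove F n 0 d


/-! ### Auxiliary machinery for the proof -/

section AuxProof

variable {F : Type} [CommSemiring F] {n : ℕ}

/-- `Finsupp.mapDomain`, but typed at `NCPoly` so that `*` means convolution. -/
noncomputable def NCmapDomain (r : FreeMonoid (Fin n) → FreeMonoid (Fin n))
    (f : NCPoly F n) : NCPoly F n := MonoidAlgebra.ofCoeff (Finsupp.mapDomain r f.coeff)

lemma NCrestrict_eq (a b : ℕ) (f : NCPoly F n) :
    NCrestrict a b f = NCmapDomain
      (fun w => FreeMonoid.ofList (((FreeMonoid.toList w).drop (a - 1)).take (b + 1 - a))) f :=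
  rfl

lemma NCrestrict_zero (a b : ℕ) : NCrestrict a b (0 : NCPoly F n) = 0 :=
  congrArg MonoidAlgebra.ofCoeff Finsupp.mapDomain_zero

lemma NCrestrict_add (a b : ℕ) (g h : NCPoly F n) :
    NCrestrict a b (g + h) = NCrestrict a b g + NCrestrict a b h :=
  congrArg MonoidAlgebra.ofCoeff Finsupp.mapDomain_add

lemma NCrestrict_smul (a b : ℕ) (α : F) (h : NCPoly F n) :
    NCrestrict a b (α • h) = α • NCrestrict a b h :=
  congrArg MonoidAlgebra.ofCoeff (Finsupp.mapDomain_smul α h.coeff)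

lemma key_mapDomain_mul (r r1 r2 : FreeMonoid (Fin n) → FreeMonoid (Fin n)) (g h : NCPoly F n)
    (hr : ∀ w1 ∈ g.coeff.support, ∀ w2 ∈ h.coeff.support, r (w1 * w2) = r1 w1 * r2 w2) :
    NCmapDomain r (g * h) = NCmapDomain r1 g * NCmapDomain r2 h := by
  show MonoidAlgebra.mapDomain r (g * h)
    = MonoidAlgebra.mapDomain r1 g * MonoidAlgebra.mapDomain r2 h
  rw [MonoidAlgebra.mul_def, MonoidAlgebra.mapDomain_sum]
  have step1 : (g.coeff.sum fun w1 c1 =>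
      MonoidAlgebra.mapDomain r (h.coeff.sum fun w2 c2 => MonoidAlgebra.single (w1 * w2) (c1 * c2)))
      = g.coeff.sum fun w1 c1 => h.coeff.sum fun w2 c2 =>
          MonoidAlgebra.single (r1 w1) c1 * MonoidAlgebra.single (r2 w2) c2 := by
    apply Finsupp.sum_congr
    intro w1 hw1
    rw [MonoidAlgebra.mapDomain_sum]
    apply Finsupp.sum_congr
    intro w2 hw2
    rw [MonoidAlgebra.single_mul_single]
    rw [MonoidAlgebra.mapDomain_single]
    rw [hr w1 hw1 w2 hw2]
  have e1 : ∀ (r' : FreeMonoid (Fin n) → FreeMonoid (Fin n)) (f : NCPoly F n),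
      MonoidAlgebra.mapDomain r' f = f.coeff.sum fun w c => MonoidAlgebra.single (r' w) c := by
    intro r' f
    conv_lhs => rw [← MonoidAlgebra.sum_coeff_single f]
    rw [MonoidAlgebra.mapDomain_sum]
    simp only [MonoidAlgebra.mapDomain_single]
  rw [step1, e1 r1, e1 r2]
  simp only [Finsupp.sum]
  exact (Finset.sum_mul_sum (R := NCPoly F n) g.coeff.support h.coeff.support
    (fun w1 => MonoidAlgebra.single (r1 w1) (g.coeff w1))
    (fun w2 => MonoidAlgebra.single (r2 w2) (h.coeff w2))).symm

lemma mapDomain_one_eq (h : NCPoly F n) :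
    NCmapDomain (fun _ => (1 : FreeMonoid (Fin n))) h
      = MonoidAlgebra.single 1 (h.coeff.sum fun _ c => c) := by
  unfold NCmapDomain
  rw [Finsupp.mapDomain, Finsupp.sum, Finsupp.sum]
  exact congrArg MonoidAlgebra.ofCoeff
    (map_sum (Finsupp.singleAddHom (1 : FreeMonoid (Fin n))) _ _).symm

lemma single_one_mul' (β : F) (f : NCPoly F n) :
    MonoidAlgebra.single (1 : FreeMonoid (Fin n)) β * f = β • f := by
  have h1 : MonoidAlgebra.single (1 : FreeMonoid (Fin n)) β = β • (1 : NCPoly F n) := by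
    rw [MonoidAlgebra.one_def, MonoidAlgebra.smul_single', mul_one]
  rw [h1, smul_mul_assoc, one_mul]

lemma mul_single_one' (β : F) (f : NCPoly F n) :
    f * MonoidAlgebra.single (1 : FreeMonoid (Fin n)) β = β • f := by
  have h1 : MonoidAlgebra.single (1 : FreeMonoid (Fin n)) β = β • (1 : NCPoly F n) := by
    rw [MonoidAlgebra.one_def, MonoidAlgebra.smul_single', mul_one]
  rw [h1, mul_smul_comm, mul_one]

lemma algebraMap_eq_single (α : F) :
    algebraMap F (NCPoly F n) α = MonoidAlgebra.single 1 α := rfl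

lemma isHomog_mul {d1 d2 : ℕ} {g h : NCPoly F n} (hg : IsHomog d1 g) (hh : IsHomog d2 h) :
    IsHomog (d1 + d2) (g * h) := by
  classical
  intro w hw
  have := MonoidAlgebra.support_coeff_mul_subset g h hw
  rw [Finset.mem_mul] at this
  obtain ⟨w1, hw1, w2, hw2, rfl⟩ := this
  rw [FreeMonoid.toList_mul, List.length_append, hg w1 hw1, hh w2 hw2]

lemma homog_unique {d1 d2 : ℕ} {f : NCPoly F n} (hf : f ≠ 0)
    (h1 : IsHomog d1 f) (h2 : IsHomog d2 f) : d1 = d2 := by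
  obtain ⟨w, hw⟩ := Finsupp.support_nonempty_iff.mpr (mt MonoidAlgebra.coeff_eq_zero.mp hf)
  rw [← h1 w hw, h2 w hw]

lemma isConst_of_homog_zero {g : NCPoly F n} (hg : IsHomog 0 g) :
    NCCircuit.IsConstPoly g := by
  refine ⟨g.coeff 1, ?_⟩
  rw [algebraMap_eq_single]
  apply MonoidAlgebra.coeff_injective
  apply Finsupp.support_subset_singleton.mp
  intro w hw
  have h0 : (FreeMonoid.toList w).length = 0 := hg w hw
  have : FreeMonoid.toList w = [] := List.eq_nil_of_length_eq_zero h0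
  have : w = 1 := FreeMonoid.toList.injective (by rw [this, FreeMonoid.toList_one])
  simp [this]

/-- The degree of a nonzero homogeneous polynomial, read off from its support. -/
noncomputable def homDeg (f : NCPoly F n) : ℕ :=
  f.coeff.support.sup fun w => (FreeMonoid.toList w).length

lemma homDeg_eq {d : ℕ} {f : NCPoly F n} (hf : f ≠ 0) (hd : IsHomog d f) : homDeg f = d := by
  apply le_antisymm
  · exact Finset.sup_le fun w hw => (hd w hw).le
  · obtain ⟨w, hw⟩ := Finsupp.support_nonempty_iff.mpr (mt MonoidAlgebra.coeff_eq_zero.mp hf)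
    rw [← hd w hw]
    exact Finset.le_sup hw

/-! ### List splitting lemmas -/

lemma word_left {α : Type*} {l1 l2 : List α} {a b e : ℕ} (ha : 1 ≤ a) (hb : b ≤ e)
    (hl : l1.length = e) :
    ((l1 ++ l2).drop (a - 1)).take (b + 1 - a) = (l1.drop (a - 1)).take (b + 1 - a) := by
  rw [List.drop_append, List.take_append]
  have h0 : b + 1 - a - (l1.drop (a - 1)).length = 0 := by
    rw [List.length_drop, hl]; omega
  rw [h0, List.take_zero, List.append_nil]

lemma word_right {α : Type*} {l1 l2 : List α} {a b e : ℕ} (hab : a ≤ b) (hea : e < a)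
    (hl : l1.length = e) :
    ((l1 ++ l2).drop (a - 1)).take (b + 1 - a)
      = (l2.drop (a - e - 1)).take ((b - e) + 1 - (a - e)) := by
  have h1 : l1.drop (a - 1) = [] := List.drop_eq_nil_of_le (by omega)
  rw [List.drop_append, h1, List.nil_append, hl]
  have e1 : a - 1 - e = a - e - 1 := by omega
  have e2 : b + 1 - a = (b - e) + 1 - (a - e) := by omega
  rw [e1, e2]

lemma word_mid {α : Type*} {l1 l2 : List α} {a b e : ℕ} (ha : 1 ≤ a) (hae : a ≤ e)
    (heb : e < b) (hl : l1.length = e) :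
    ((l1 ++ l2).drop (a - 1)).take (b + 1 - a)
      = (l1.drop (a - 1)).take (e + 1 - a) ++ (l2.drop (1 - 1)).take ((b - e) + 1 - 1) := by
  have h0 : a - 1 - l1.length = 0 := by omega
  rw [List.drop_append, h0, List.drop_zero, List.take_append]
  congr 1
  · rw [List.take_of_length_le (by rw [List.length_drop, hl]; omega),
      List.take_of_length_le (by rw [List.length_drop, hl]; omega)]
  · have e1 : b + 1 - a - (l1.drop (a - 1)).length = b - e := by
      rw [List.length_drop, hl]; omega
    rw [e1, Nat.add_sub_cancel]

end AuxProof

section MainProof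

variable {F : Type} [Field F] {n : ℕ}

/-- The candidate spanning element attached to a gate and a split position. -/
noncomputable def spanElt (c : NCCircuit F n) (ℓ : ℕ) (i : Fin c.gates) (t : ℕ) :
    NCPoly F n :=
  match c.gate i with
  | .mul p q =>
      NCrestrict (homDeg (c.evalAux p.val (p.isLt.trans i.isLt)) - t + 1)
          (homDeg (c.evalAux p.val (p.isLt.trans i.isLt)))
          (c.evalAux p.val (p.isLt.trans i.isLt))
        * NCrestrict 1 (ℓ - t) (c.evalAux q.val (q.isLt.trans i.isLt))
  | _ => 0

lemma spanElt_mul {c : NCCircuit F n} {ℓ : ℕ} {i : Fin c.gates} {p q : Fin i.val}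
    (hg : c.gate i = GateOp.mul p q) (t : ℕ) :
    spanElt c ℓ i t
      = NCrestrict (homDeg (c.evalAux p.val (p.isLt.trans i.isLt)) - t + 1)
          (homDeg (c.evalAux p.val (p.isLt.trans i.isLt)))
          (c.evalAux p.val (p.isLt.trans i.isLt))
        * NCrestrict 1 (ℓ - t) (c.evalAux q.val (q.isLt.trans i.isLt)) := by
  unfold spanElt
  rw [hg]

lemma homog_component {g h : NCPoly F n} {d dg dh : ℕ} (hf0 : g + h ≠ 0)
    (hd : IsHomog d (g + h)) (hdg : IsHomog dg g) (hdh : IsHomog dh h) (hg0 : g ≠ 0) :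
    IsHomog d g := by
  classical
  obtain ⟨w0, hw0⟩ := Finsupp.support_nonempty_iff.mpr (mt MonoidAlgebra.coeff_eq_zero.mp hg0)
  by_cases hwf : w0 ∈ (g + h).coeff.support
  · intro w hw
    rw [hdg w hw, ← hdg w0 hw0, hd w0 hwf]
  · have hgw : g.coeff w0 ≠ 0 := Finsupp.mem_support_iff.mp hw0
    have hfw : (g + h).coeff w0 = 0 := Finsupp.notMem_support_iff.mp hwf
    have hhw : h.coeff w0 ≠ 0 := by
      intro h0
      rw [MonoidAlgebra.coeff_add, Finsupp.add_apply, h0, add_zero] at hfw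
      exact hgw hfw
    have hdgh : dg = dh := by
      rw [← hdg w0 hw0, hdh w0 (Finsupp.mem_support_iff.mpr hhw)]
    have hfhom : IsHomog dg (g + h) := by
      intro w hw
      rcases Finset.mem_union.mp (Finsupp.support_add hw) with h1 | h2
      · exact hdg w h1
      · rw [hdh w h2, hdgh]
    have hddg : d = dg := homog_unique hf0 hd hfhom
    intro w hw
    rw [hdg w hw, hddg]

/-- Main induction: every restriction of a gate polynomial lies in the span of the
spanning elements attached to non-scalar product gates. -/
lemma main_mem (c : NCCircuit F n) (hc : c.Homogeneous) (ℓ : ℕ) (hℓ : 2 ≤ ℓ)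
    (T : Set (NCPoly F n))
    (hT : ∀ (i : Fin c.gates) (t : ℕ),
      (∃ p q, c.gate i = GateOp.mul p q ∧
        ¬ NCCircuit.IsConstPoly (c.evalAux p.val (p.isLt.trans i.isLt)) ∧
        ¬ NCCircuit.IsConstPoly (c.evalAux q.val (q.isLt.trans i.isLt))) →
      1 ≤ t → t ≤ ℓ - 1 → spanElt c ℓ i t ∈ T) :
    ∀ (i : ℕ) (hi : i < c.gates) (d a b : ℕ), IsHomog d (c.evalAux i hi) →
      1 ≤ a → a ≤ b → b ≤ d → b + 1 = a + ℓ →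
      NCrestrict a b (c.evalAux i hi) ∈ Submodule.span F T := by
  intro i
  induction i using Nat.strong_induction_on with
  | _ i IH =>
    intro hi d a b hdf ha hab hbd hba
    by_cases hf0 : c.evalAux i hi = 0
    · rw [hf0, NCrestrict_zero]
      exact Submodule.zero_mem _
    rcases hgate : c.gate ⟨i, hi⟩ with v | α | ⟨p, q⟩ | ⟨p, q⟩
    · -- variable gate
      exfalso
      have hev : c.evalAux i hi = NCvar v := by rw [NCCircuit.evalAux, hgate]
      have h1 : FreeMonoid.of v ∈ (c.evalAux i hi).coeff.support := by
        rw [hev]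
        unfold NCvar
        rw [MonoidAlgebra.of_apply, MonoidAlgebra.coeff_single, Finsupp.support_single_ne_zero _ (one_ne_zero)]
        exact Finset.mem_singleton_self _
      have h2 := hdf _ h1
      rw [FreeMonoid.toList_of] at h2
      simp at h2
      omega
    · -- constant gate
      exfalso
      have hev : c.evalAux i hi = algebraMap F (NCPoly F n) α := by
        rw [NCCircuit.evalAux, hgate]
      have hα : α ≠ 0 := by
        intro h0
        apply hf0
        rw [hev, h0, map_zero]
      have h1 : (1 : FreeMonoid (Fin n)) ∈ (c.evalAux i hi).coeff.support := by
        rw [hev, algebraMap_eq_single, MonoidAlgebra.coeff_single, Finsupp.support_single_ne_zero _ hα]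
        exact Finset.mem_singleton_self _
      have h2 := hdf _ h1
      rw [FreeMonoid.toList_one] at h2
      simp at h2
      omega
    · -- addition gate
      have hev : c.evalAux i hi = c.evalAux p.val (p.isLt.trans hi)
          + c.evalAux q.val (q.isLt.trans hi) := by
        rw [NCCircuit.evalAux, hgate]
      set g := c.evalAux p.val (p.isLt.trans hi) with hgdef
      set h := c.evalAux q.val (q.isLt.trans hi) with hhdef
      obtain ⟨dg, hdg⟩ := hc ⟨p.val, p.isLt.trans hi⟩
      obtain ⟨dh, hdh⟩ := hc ⟨q.val, q.isLt.trans hi⟩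
      have hdg : IsHomog dg g := hdg
      have hdh : IsHomog dh h := hdh
      rw [hev] at hf0 hdf
      have hmg : NCrestrict a b g ∈ Submodule.span F T := by
        by_cases hg0 : g = 0
        · rw [hg0, NCrestrict_zero]; exact Submodule.zero_mem _
        · exact IH p.val p.isLt (p.isLt.trans hi) d a b
            (homog_component hf0 hdf hdg hdh hg0) ha hab hbd hba
      have hmh : NCrestrict a b h ∈ Submodule.span F T := by
        by_cases hh0 : h = 0
        · rw [hh0, NCrestrict_zero]; exact Submodule.zero_mem _
        · have hf0' : h + g ≠ 0 := by rwa [add_comm] at hf0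
          have hdf' : IsHomog d (h + g) := by rwa [add_comm] at hdf
          exact IH q.val q.isLt (q.isLt.trans hi) d a b
            (homog_component hf0' hdf' hdh hdg hh0) ha hab hbd hba
      rw [hev, NCrestrict_add]
      exact Submodule.add_mem _ hmg hmh
    · -- multiplication gate
      have hev : c.evalAux i hi = c.evalAux p.val (p.isLt.trans hi)
          * c.evalAux q.val (q.isLt.trans hi) := by
        rw [NCCircuit.evalAux, hgate]
      set g := c.evalAux p.val (p.isLt.trans hi) with hgdef
      set h := c.evalAux q.val (q.isLt.trans hi) with hhdef
      obtain ⟨dg, hdg⟩ := hc ⟨p.val, p.isLt.trans hi⟩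
      obtain ⟨dh, hdh⟩ := hc ⟨q.val, q.isLt.trans hi⟩
      have hdg : IsHomog dg g := hdg
      have hdh : IsHomog dh h := hdh
      have hg0 : g ≠ 0 := by
        intro e; apply hf0; rw [hev, e, zero_mul]
      have hh0 : h ≠ 0 := by
        intro e; apply hf0; rw [hev, e, mul_zero]
      have hd' : d = dg + dh := by
        apply homog_unique (f := g * h) (by rwa [hev] at hf0) (by rwa [hev] at hdf)
        exact isHomog_mul hdg hdh
      by_cases hcg : NCCircuit.IsConstPoly g
      · obtain ⟨α, hα⟩ := hcg
        have hfs : c.evalAux i hi = α • h := by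
          rw [hev, hα, ← Algebra.smul_def]
        have hα0 : α ≠ 0 := by
          intro e; apply hf0; rw [hfs, e, zero_smul]
        have hdh' : IsHomog d h := by
          intro w hw
          apply hdf
          rw [hfs, MonoidAlgebra.coeff_smul, Finsupp.support_smul_eq hα0]
          exact hw
        rw [hfs, NCrestrict_smul]
        exact Submodule.smul_mem _ α
          (IH q.val q.isLt (q.isLt.trans hi) d a b hdh' ha hab hbd hba)
      by_cases hch : NCCircuit.IsConstPoly h
      · obtain ⟨α, hα⟩ := hch
        have hfs : c.evalAux i hi = α • g := by
          rw [hev, hα, ← Algebra.commutes, ← Algebra.smul_def]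
        have hα0 : α ≠ 0 := by
          intro e; apply hf0; rw [hfs, e, zero_smul]
        have hdg' : IsHomog d g := by
          intro w hw
          apply hdf
          rw [hfs, MonoidAlgebra.coeff_smul, Finsupp.support_smul_eq hα0]
          exact hw
        rw [hfs, NCrestrict_smul]
        exact Submodule.smul_mem _ α
          (IH p.val p.isLt (p.isLt.trans hi) d a b hdg' ha hab hbd hba)
      -- non-scalar product gate
      have hdg1 : 1 ≤ dg := by
        by_contra hcon
        have : dg = 0 := by omega
        exact hcg (isConst_of_homog_zero (this ▸ hdg))
      have hdh1 : 1 ≤ dh := by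
        by_contra hcon
        have : dh = 0 := by omega
        exact hch (isConst_of_homog_zero (this ▸ hdh))
      rcases le_or_gt b dg with hcase1 | hcase1
      · -- J entirely inside g
        have heq : NCrestrict a b (c.evalAux i hi)
            = NCmapDomain (fun w => FreeMonoid.ofList
                (((FreeMonoid.toList w).drop (a - 1)).take (b + 1 - a))) g
              * NCmapDomain (fun _ => 1) h := by
          rw [hev, NCrestrict_eq]
          apply key_mapDomain_mul
          intro w1 hw1 w2 hw2
          rw [mul_one, FreeMonoid.toList_mul]
          exact congrArg FreeMonoid.ofList (word_left ha hcase1 (hdg w1 hw1))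
        rw [heq, mapDomain_one_eq, mul_single_one', ← NCrestrict_eq]
        exact Submodule.smul_mem _ _
          (IH p.val p.isLt (p.isLt.trans hi) dg a b hdg ha hab hcase1 hba)
      rcases le_or_gt a dg with hcase2 | hcase2
      · -- J straddles the two factors
        have heq : NCrestrict a b (c.evalAux i hi)
            = NCrestrict a dg g * NCrestrict 1 (b - dg) h := by
          rw [hev, NCrestrict_eq, NCrestrict_eq a dg, NCrestrict_eq 1 (b - dg)]
          apply key_mapDomain_mul
          intro w1 hw1 w2 hw2
          rw [FreeMonoid.toList_mul, ← FreeMonoid.ofList_append]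
          exact congrArg FreeMonoid.ofList
            (word_mid ha hcase2 hcase1 (hdg w1 hw1))
        have htle : dg + 1 - a ≤ ℓ - 1 := by omega
        have htge : 1 ≤ dg + 1 - a := by omega
        have hsp := spanElt_mul (c := c) (ℓ := ℓ) (i := ⟨i, hi⟩) hgate (dg + 1 - a)
        have hDg : homDeg g = dg := homDeg_eq hg0 hdg
        have ha' : homDeg g - (dg + 1 - a) + 1 = a := by rw [hDg]; omega
        have hb' : ℓ - (dg + 1 - a) = b - dg := by omega
        rw [heq]
        apply Submodule.subset_span
        have := hT ⟨i, hi⟩ (dg + 1 - a) ⟨p, q, hgate, hcg, hch⟩ htge htle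
        rwa [hsp, ha', hDg, hb'] at this
      · -- J entirely inside h
        have heq : NCrestrict a b (c.evalAux i hi)
            = NCmapDomain (fun _ => 1) g
              * NCrestrict (a - dg) (b - dg) h := by
          rw [hev, NCrestrict_eq, NCrestrict_eq (a - dg) (b - dg)]
          apply key_mapDomain_mul
          intro w1 hw1 w2 hw2
          rw [one_mul, FreeMonoid.toList_mul]
          exact congrArg FreeMonoid.ofList (word_right hab hcase2 (hdg w1 hw1))
        rw [heq, mapDomain_one_eq, single_one_mul']
        refine Submodule.smul_mem _ _
          (IH q.val q.isLt (q.isLt.trans hi) dh (a - dg) (b - dg) hdh ?_ ?_ ?_ ?_)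
        · omega
        · omega
        · omega
        · omega

end MainProof

/-- If `Γ` is a homogeneous circuit with `s` non-scalar product gates and
`ℓ ≥ 2`, then the span of `{f^J : f computed by a gate of Γ, J ⊆ [deg f] an
interval of length ℓ}` has dimension at most `(ℓ-1)·s`. -/
theorem measure_le_nonScalarSize (F : Type) [Field F] (n : ℕ)
    (c : NCCircuit F n) (hc : c.Homogeneous) (ℓ : ℕ) (hℓ : 2 ≤ ℓ) :
    Module.rank F (Submodule.span F
      {g : NCPoly F n | ∃ (i : Fin c.gates) (d a b : ℕ),
        IsHomog d (c.eval i) ∧ 1 ≤ a ∧ a ≤ b ∧ b ≤ d ∧ b + 1 = a + ℓ ∧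
        g = NCrestrict a b (c.eval i)})
      ≤ ((ℓ - 1) * c.nonScalarSize : ℕ) := by
  classical
  set P : Fin c.gates → Prop := fun i => ∃ a b, c.gate i = GateOp.mul a b ∧
      ¬ NCCircuit.IsConstPoly (c.evalAux a.val (a.isLt.trans i.isLt)) ∧
      ¬ NCCircuit.IsConstPoly (c.evalAux b.val (b.isLt.trans i.isLt)) with hP
  set M : Finset (Fin c.gates) := Finset.univ.filter P with hM
  set T : Finset (NCPoly F n) :=
    (M ×ˢ Finset.Icc 1 (ℓ - 1)).image (fun z => spanElt c ℓ z.1 z.2) with hT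
  have hsub : {g : NCPoly F n | ∃ (i : Fin c.gates) (d a b : ℕ),
        IsHomog d (c.eval i) ∧ 1 ≤ a ∧ a ≤ b ∧ b ≤ d ∧ b + 1 = a + ℓ ∧
        g = NCrestrict a b (c.eval i)} ⊆ (Submodule.span F (T : Set (NCPoly F n)) : Set _) := by
    rintro g ⟨i, d, a, b, hd, ha, hab, hbd, hba, rfl⟩
    refine main_mem c hc ℓ hℓ (T : Set (NCPoly F n)) ?_ i.val i.isLt d a b hd ha hab hbd hba
    intro j t hj ht1 ht2
    rw [hT]
    simp only [Finset.coe_image, Set.mem_image, Finset.mem_coe]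
    refine ⟨(j, t), ?_, rfl⟩
    rw [Finset.mem_product]
    exact ⟨by rw [hM]; simp only [Finset.mem_filter, Finset.mem_univ, true_and]; exact hj,
      Finset.mem_Icc.mpr ⟨ht1, ht2⟩⟩
  have h1 := Submodule.rank_mono (Submodule.span_le.mpr hsub)
  refine le_trans h1 (le_trans (rank_span_finset_le T) ?_)
  rw [Nat.cast_le]
  calc T.card ≤ (M ×ˢ Finset.Icc 1 (ℓ - 1)).card := Finset.card_image_le
    _ = M.card * (ℓ - 1) := by
        rw [Finset.card_product, Nat.card_Icc, Nat.add_sub_cancel]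
    _ = (ℓ - 1) * c.nonScalarSize := by
        rw [mul_comm]
        congr 1
        rw [NCCircuit.nonScalarSize, Set.ncard_eq_toFinset_card', Set.toFinset_setOf]
end

section
/- Every homogeneous non-commutative circuit computing the monomial f = ∏_{i=1}^n ∏_{j=1}^n (x_i x_j) (in some fixed order of the n² pairs, so that f has degree 2n² and every pair (i,j) appears as a consecutive block at even positions) contains at least n² non-scalar product gates. -/
/- ======================= Auxiliary development ======================= -/

section ListAux
variable {α β : Type*}

lemma NCAux_length_flatMap_const (L : ℕ) (G : α → List β) (hG : ∀ x, (G x).length = L) :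
    ∀ l : List α, (l.flatMap G).length = L * l.length
  | [] => by simp
  | x :: t => by
      simp only [List.flatMap_cons, List.length_append, hG x,
        NCAux_length_flatMap_const L G hG t, List.length_cons]
      ring

lemma NCAux_drop_flatMap_const (L : ℕ) (G : α → List β) (hG : ∀ x, (G x).length = L) :
    ∀ (l : List α) (k : ℕ) (hk : k < l.length),
      (l.flatMap G).drop (L * k) = G (l[k]) ++ (l.drop (k + 1)).flatMap G
  | x :: t, 0, hk => by simp
  | x :: t, (k+1), hk => by
      rw [List.flatMap_cons]
      have h1 : L * (k + 1) = (G x).length + L * k := by rw [hG x]; ring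
      rw [h1, List.drop_length_add_append]
      have hk' : k < t.length := by simpa using hk
      rw [NCAux_drop_flatMap_const L G hG t k hk']
      simp

end ListAux

namespace NCAux

section CommSemiringPart
variable {F : Type} [CommSemiring F] {n : ℕ}

/-- last-letter marginal -/
noncomputable def lastL (f : NCPoly F n) : NCPoly F n :=
  MonoidAlgebra.mapDomain
    (fun w => FreeMonoid.ofList
      ((FreeMonoid.toList w).drop ((FreeMonoid.toList w).length - 1))) f

/-- first-letter marginal -/
noncomputable def headL (f : NCPoly F n) : NCPoly F n :=
  MonoidAlgebra.mapDomain (fun w => FreeMonoid.ofList ((FreeMonoid.toList w).take 1)) f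

lemma restrict_take2 (q : ℕ) (f : NCPoly F n) :
    NCrestrict q (q + 1) f =
      MonoidAlgebra.mapDomain
        (fun w => FreeMonoid.ofList (((FreeMonoid.toList w).drop (q - 1)).take 2)) f := by
  unfold NCrestrict MonoidAlgebra.mapDomain
  have h : q + 1 + 1 - q = 2 := by omega
  simp only [h]

lemma mapDomain_eq_sum (g : FreeMonoid (Fin n) → FreeMonoid (Fin n)) (A : NCPoly F n) :
    MonoidAlgebra.mapDomain g A =
      ∑ u ∈ A.coeff.support, MonoidAlgebra.single (g u) (A.coeff u) := by
  unfold MonoidAlgebra.mapDomain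
  rw [Finsupp.mapDomain, Finsupp.sum, MonoidAlgebra.ofCoeff_sum]
  simp only [MonoidAlgebra.ofCoeff_single]

lemma mapDomain_fsum {ι : Type*} (g : FreeMonoid (Fin n) → FreeMonoid (Fin n)) (s : Finset ι)
    (f : ι → NCPoly F n) :
    MonoidAlgebra.mapDomain g (∑ i ∈ s, f i) = ∑ i ∈ s, MonoidAlgebra.mapDomain g (f i) := by
  classical
  induction s using Finset.induction_on with
  | empty => simp [MonoidAlgebra.mapDomain_zero]
  | insert a s ha ih =>
    rw [Finset.sum_insert ha, Finset.sum_insert ha, MonoidAlgebra.mapDomain_add, ih]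

lemma single_fsum {ι : Type*} (a : FreeMonoid (Fin n)) (s : Finset ι) (f : ι → F) :
    ∑ i ∈ s, (MonoidAlgebra.single a (f i) : NCPoly F n) =
      MonoidAlgebra.single a (∑ i ∈ s, f i) :=
  (map_sum (MonoidAlgebra.singleAddHom (R := F) a) f s).symm

lemma mul_expand (g : FreeMonoid (Fin n) → FreeMonoid (Fin n)) (A B : NCPoly F n) :
    MonoidAlgebra.mapDomain g (A * B) =
      ∑ u ∈ A.coeff.support, ∑ v ∈ B.coeff.support,
        MonoidAlgebra.single (g (u * v)) (A.coeff u * B.coeff v) := by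
  rw [MonoidAlgebra.mul_def]
  simp only [Finsupp.sum]
  rw [mapDomain_fsum]
  refine Finset.sum_congr rfl fun u hu => ?_
  rw [mapDomain_fsum]
  refine Finset.sum_congr rfl fun v hv => ?_
  exact MonoidAlgebra.mapDomain_single

lemma restrict_mul_left {A B : NCPoly F n} {dA q : ℕ} (hq : 1 ≤ q) (hle : q + 1 ≤ dA)
    (hA : IsHomog dA A) :
    NCrestrict q (q + 1) (A * B) = coeffSum B • NCrestrict q (q + 1) A := by
  rw [restrict_take2, restrict_take2, mul_expand]
  rw [mapDomain_eq_sum, Finset.smul_sum]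
  refine Finset.sum_congr rfl fun u hu => ?_
  have hu' : (FreeMonoid.toList u).length = dA := hA u hu
  have key : ∀ v : FreeMonoid (Fin n),
      FreeMonoid.ofList (((FreeMonoid.toList (u * v)).drop (q - 1)).take 2)
        = FreeMonoid.ofList (((FreeMonoid.toList u).drop (q - 1)).take 2) := by
    intro v
    rw [FreeMonoid.toList_mul, List.drop_append_of_le_length (by omega),
      List.take_append_of_le_length (by rw [List.length_drop]; omega)]
  simp only [key]
  rw [single_fsum]
  rw [MonoidAlgebra.smul_single]
  congr 1
  rw [← Finset.mul_sum, smul_eq_mul, mul_comm]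
  rfl

lemma restrict_mul_right {A B : NCPoly F n} {dA q : ℕ} (hgt : dA < q)
    (hA : IsHomog dA A) :
    NCrestrict q (q + 1) (A * B) = coeffSum A • NCrestrict (q - dA) (q - dA + 1) B := by
  rw [restrict_take2, restrict_take2, mul_expand]
  rw [mapDomain_eq_sum, Finset.smul_sum]
  rw [Finset.sum_comm]
  refine Finset.sum_congr rfl fun v hv => ?_
  have key : ∀ u ∈ A.coeff.support,
      FreeMonoid.ofList (((FreeMonoid.toList (u * v)).drop (q - 1)).take 2)
        = FreeMonoid.ofList (((FreeMonoid.toList v).drop (q - dA - 1)).take 2) := by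
    intro u hu
    have hu' : (FreeMonoid.toList u).length = dA := hA u hu
    rw [FreeMonoid.toList_mul]
    have : q - 1 = (FreeMonoid.toList u).length + (q - dA - 1) := by omega
    rw [this, List.drop_length_add_append]
  rw [Finset.sum_congr rfl fun u hu => by rw [key u hu]]
  rw [single_fsum]
  rw [MonoidAlgebra.smul_single]
  congr 1
  rw [Finset.sum_congr rfl fun u _ => mul_comm (A.coeff u) (B.coeff v), ← Finset.mul_sum,
    smul_eq_mul, mul_comm]
  rfl

lemma restrict_mul_straddle {A B : NCPoly F n} {dA : ℕ} (hdA : 1 ≤ dA)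
    (hA : IsHomog dA A) (hB : ∀ w ∈ B.coeff.support, 1 ≤ (FreeMonoid.toList w).length) :
    NCrestrict dA (dA + 1) (A * B) = lastL A * headL B := by
  rw [restrict_take2, mul_expand]
  unfold lastL headL
  rw [mapDomain_eq_sum, mapDomain_eq_sum, Finset.sum_mul_sum]
  refine Finset.sum_congr rfl fun u hu => Finset.sum_congr rfl fun v hv => ?_
  have hu' : (FreeMonoid.toList u).length = dA := hA u hu
  have hv' : 1 ≤ (FreeMonoid.toList v).length := hB v hv
  rw [MonoidAlgebra.single_mul_single]
  congr 1
  rw [FreeMonoid.toList_mul, List.drop_append_of_le_length (by omega)]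
  have h2 : (2 : ℕ) = ((FreeMonoid.toList u).drop (dA - 1)).length + 1 := by
    rw [List.length_drop]; omega
  rw [h2, List.take_length_add_append, hu', FreeMonoid.ofList_append]

lemma algebraMap_eq_single (a : F) :
    algebraMap F (NCPoly F n) a = MonoidAlgebra.single 1 a := by
  rw [Algebra.algebraMap_eq_smul_one, MonoidAlgebra.one_def, MonoidAlgebra.smul_single,
    smul_eq_mul, mul_one]

lemma single_one_mul (c : F) (B : NCPoly F n) :
    MonoidAlgebra.single (1 : FreeMonoid (Fin n)) c * B = c • B := by
  rw [← algebraMap_eq_single, Algebra.smul_def]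

lemma mul_single_one (c : F) (A : NCPoly F n) :
    A * MonoidAlgebra.single (1 : FreeMonoid (Fin n)) c = c • A := by
  rw [← algebraMap_eq_single, ← Algebra.commutes, Algebra.smul_def]

lemma homog_zero_eq_single {A : NCPoly F n} (hA : IsHomog 0 A) :
    A = MonoidAlgebra.single 1 (A.coeff 1) := by
  have h : A.coeff.support ⊆ {1} := by
    intro w hw
    have := hA w hw
    rw [List.length_eq_zero_iff] at this
    have hw1 : w = 1 := by
      rw [← FreeMonoid.ofList_toList w, this, FreeMonoid.ofList_nil]
    simp [hw1]
  exact MonoidAlgebra.coeff_injective (Finsupp.support_subset_singleton.mp h)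

lemma restrict_zero (q r : ℕ) : NCrestrict q r (0 : NCPoly F n) = 0 :=
  MonoidAlgebra.mapDomain_zero _

lemma restrict_add (q r : ℕ) (A B : NCPoly F n) :
    NCrestrict q r (A + B) = NCrestrict q r A + NCrestrict q r B :=
  MonoidAlgebra.mapDomain_add _ _ _

lemma restrict_smul (q r : ℕ) (a : F) (A : NCPoly F n) :
    NCrestrict q r (a • A) = a • NCrestrict q r A :=
  MonoidAlgebra.mapDomain_smul _ a A

/-- the word `x_1x_1x_1x_2 ⋯` -/
def wlist (n : ℕ) : List (Fin n) :=
  (List.finRange n).flatMap (fun i => (List.finRange n).flatMap (fun j => [i, j]))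

lemma inner_length (i : Fin n) :
    ((List.finRange n).flatMap (fun j => [i, j])).length = 2 * n := by
  rw [NCAux_length_flatMap_const 2 (fun j => [i, j]) (fun _ => rfl)]
  simp

lemma wlist_length (n : ℕ) : (wlist n).length = 2 * n * n := by
  unfold wlist
  rw [NCAux_length_flatMap_const (2 * n) _ (fun i => inner_length i)]
  simp

lemma wlist_window (i j : Fin n) :
    ((wlist n).drop (2 * n * i.val + 2 * j.val)).take 2 = [i, j] := by
  have hi : i.val < (List.finRange n).length := by simp
  have hj : j.val < (List.finRange n).length := by simp
  have hgi : (List.finRange n)[i.val] = i := by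
    rw [List.getElem_finRange]; exact Fin.ext rfl
  have hgj : (List.finRange n)[j.val] = j := by
    rw [List.getElem_finRange]; exact Fin.ext rfl
  rw [← List.drop_drop]
  unfold wlist
  rw [NCAux_drop_flatMap_const (2 * n) _ (fun x => inner_length x) _ i.val hi, hgi]
  rw [List.drop_append_of_le_length (by rw [inner_length]; omega)]
  rw [NCAux_drop_flatMap_const 2 (fun j' => [i, j']) (fun _ => rfl) _ j.val hj, hgj]
  rw [List.append_assoc]
  rw [List.take_append_of_le_length (by simp)]
  rfl

/-- The set of non-scalar product gates. -/
def NSset (c : NCCircuit F n) : Set (Fin c.gates) :=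
  {i : Fin c.gates | ∃ a b, c.gate i = GateOp.mul a b ∧
      ¬ NCCircuit.IsConstPoly (c.evalAux a.val (a.isLt.trans i.isLt)) ∧
      ¬ NCCircuit.IsConstPoly (c.evalAux b.val (b.isLt.trans i.isLt))}

/-- The vector associated to a non-scalar product gate. -/
noncomputable def elem (c : NCCircuit F n) (i : Fin c.gates) : NCPoly F n :=
  match c.gate i with
  | GateOp.mul a b =>
      lastL (c.evalAux a.val (a.isLt.trans i.isLt)) *
        headL (c.evalAux b.val (b.isLt.trans i.isLt))
  | _ => 0

lemma elem_mul {c : NCCircuit F n} {i : Fin c.gates} {a b : Fin i.val}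
    (hg : c.gate i = GateOp.mul a b) :
    elem c i = lastL (c.evalAux a.val (a.isLt.trans i.isLt)) *
        headL (c.evalAux b.val (b.isLt.trans i.isLt)) := by
  unfold elem
  split
  · rename_i a' b' heq
    rw [hg] at heq
    cases heq
    rfl
  · rename_i hne
    exact absurd hg (by intro h; exact hne _ _ h)

noncomputable def SpanS (c : NCCircuit F n) : Submodule F (NCPoly F n) :=
  Submodule.span F (elem c '' NSset c)

lemma evalAux_unfold (c : NCCircuit F n) (i : ℕ) (h : i < c.gates) :
    c.evalAux i h =
      match c.gate ⟨i, h⟩ with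
      | .var v => NCvar v
      | .const a => algebraMap F (NCPoly F n) a
      | .add a b => c.evalAux a.val (a.isLt.trans h) + c.evalAux b.val (b.isLt.trans h)
      | .mul a b => c.evalAux a.val (a.isLt.trans h) * c.evalAux b.val (b.isLt.trans h) := by
  rw [NCCircuit.evalAux]

end CommSemiringPart

section FieldPart
variable {F : Type} [Field F] {n : ℕ}

lemma nonconst_of_homog {A : NCPoly F n} {d : ℕ} (hA0 : A ≠ 0) (hA : IsHomog d A)
    (hd : 1 ≤ d) : ¬ NCCircuit.IsConstPoly A := by
  rintro ⟨a, rfl⟩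
  rw [algebraMap_eq_single] at hA hA0
  rcases eq_or_ne a 0 with rfl | ha
  · simp at hA0
  · have h1 : (1 : FreeMonoid (Fin n)) ∈
        (MonoidAlgebra.single (1 : FreeMonoid (Fin n)) a).coeff.support := by
      rw [MonoidAlgebra.coeff_single, Finsupp.support_single_ne_zero _ ha]; simp
    have := hA _ h1
    rw [FreeMonoid.toList_one] at this
    simp at this; omega

lemma homog_add_support {A B : NCPoly F n} {dA dB q : ℕ}
    (hA : IsHomog dA A) (hB : IsHomog dB B) (hAB : A + B ≠ 0)
    (h : ∀ w ∈ (A + B).coeff.support, q + 1 ≤ (FreeMonoid.toList w).length) :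
    ∀ w ∈ A.coeff.support, q + 1 ≤ (FreeMonoid.toList w).length := by
  classical
  intro w hw
  by_cases hww : w ∈ (A + B).coeff.support
  · exact h w hww
  · have hBw : w ∈ B.coeff.support := by
      rw [Finsupp.mem_support_iff] at hw ⊢
      rw [Finsupp.notMem_support_iff] at hww
      intro hB0
      rw [MonoidAlgebra.coeff_add, Finsupp.add_apply, hB0, add_zero] at hww
      exact hw hww
    obtain ⟨w₀, hw₀⟩ := Finsupp.support_nonempty_iff.mpr (mt MonoidAlgebra.coeff_eq_zero.mp hAB)
    have hw₀' := Finsupp.support_add (g₁ := A.coeff) (g₂ := B.coeff) hw₀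
    have hlen : (FreeMonoid.toList w₀).length = (FreeMonoid.toList w).length := by
      rcases Finset.mem_union.mp hw₀' with h' | h'
      · rw [hA w₀ h', hA w hw]
      · rw [hB w₀ h', hB w hBw]
    rw [← hlen]
    exact h w₀ hw₀

lemma key (c : NCCircuit F n) (hc : c.Homogeneous) :
    ∀ (i : ℕ) (h : i < c.gates) (q : ℕ), 1 ≤ q →
      (∀ w ∈ (c.evalAux i h).coeff.support, q + 1 ≤ (FreeMonoid.toList w).length) →
      NCrestrict q (q + 1) (c.evalAux i h) ∈ SpanS c := by
  intro i
  induction i using Nat.strong_induction_on with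
  | _ i IH =>
    intro h q hq hsupp
    classical
    have Eeq := evalAux_unfold c i h
    cases hg : c.gate ⟨i, h⟩ with
    | var v =>
      rw [hg] at Eeq
      exfalso
      have hEv : c.evalAux i h = NCvar v := Eeq
      have hmem : FreeMonoid.of v ∈ (c.evalAux i h).coeff.support := by
        rw [hEv]
        unfold NCvar
        rw [MonoidAlgebra.of_apply, MonoidAlgebra.coeff_single,
          Finsupp.support_single_ne_zero _ (one_ne_zero)]
        simp
      have := hsupp _ hmem
      rw [FreeMonoid.toList_of] at this
      simp at this
      omega
    | const a =>
      rw [hg] at Eeq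
      have hEv : c.evalAux i h = algebraMap F (NCPoly F n) a := Eeq
      rcases eq_or_ne a 0 with rfl | ha
      · rw [hEv, map_zero, restrict_zero]; exact Submodule.zero_mem _
      · exfalso
        have hmem : (1 : FreeMonoid (Fin n)) ∈ (c.evalAux i h).coeff.support := by
          rw [hEv, algebraMap_eq_single, MonoidAlgebra.coeff_single,
            Finsupp.support_single_ne_zero _ ha]
          simp
        have := hsupp _ hmem
        rw [FreeMonoid.toList_one] at this
        simp at this
    | add a b =>
      rw [hg] at Eeq
      set A := c.evalAux a.val (a.isLt.trans h) with hAdef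
      set B := c.evalAux b.val (b.isLt.trans h) with hBdef
      have hEv : c.evalAux i h = A + B := Eeq
      by_cases hAB : A + B = 0
      · rw [hEv, hAB, restrict_zero]; exact Submodule.zero_mem _
      · obtain ⟨dA, hdA⟩ := hc ⟨a.val, a.isLt.trans h⟩
        obtain ⟨dB, hdB⟩ := hc ⟨b.val, b.isLt.trans h⟩
        have hdA : IsHomog dA A := hdA
        have hdB : IsHomog dB B := hdB
        rw [hEv] at hsupp
        rw [hEv, restrict_add]
        refine Submodule.add_mem _ ?_ ?_
        · exact IH a.val a.isLt (a.isLt.trans h) q hq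
            (homog_add_support hdA hdB hAB hsupp)
        · refine IH b.val b.isLt (b.isLt.trans h) q hq ?_
          refine homog_add_support hdB hdA ?_ ?_
          · rwa [add_comm]
          · rwa [add_comm]
    | mul a b =>
      rw [hg] at Eeq
      set A := c.evalAux a.val (a.isLt.trans h) with hAdef
      set B := c.evalAux b.val (b.isLt.trans h) with hBdef
      have hEv : c.evalAux i h = A * B := Eeq
      obtain ⟨dA, hdA⟩ := hc ⟨a.val, a.isLt.trans h⟩
      obtain ⟨dB, hdB⟩ := hc ⟨b.val, b.isLt.trans h⟩
      have hdA : IsHomog dA A := hdA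
      have hdB : IsHomog dB B := hdB
      by_cases hA0 : A = 0
      · rw [hEv, hA0, zero_mul, restrict_zero]; exact Submodule.zero_mem _
      by_cases hB0 : B = 0
      · rw [hEv, hB0, mul_zero, restrict_zero]; exact Submodule.zero_mem _
      by_cases hdA0 : dA = 0
      · subst hdA0
        have hA1 : A = MonoidAlgebra.single 1 (A.coeff 1) := homog_zero_eq_single hdA
        have hc1 : A.coeff 1 ≠ 0 := by
          intro h0
          rw [h0] at hA1; simp at hA1; exact hA0 hA1
        have hABs : A * B = (A.coeff 1) • B := by rw [hA1, single_one_mul]; rw [← hA1]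
        rw [hEv, hABs, restrict_smul]
        refine Submodule.smul_mem _ _ ?_
        refine IH b.val b.isLt (b.isLt.trans h) q hq ?_
        intro w hw
        refine hsupp w ?_
        rw [hEv, hABs, MonoidAlgebra.coeff_smul, Finsupp.support_smul_eq hc1]
        exact hw
      by_cases hdB0 : dB = 0
      · subst hdB0
        have hB1 : B = MonoidAlgebra.single 1 (B.coeff 1) := homog_zero_eq_single hdB
        have hc1 : B.coeff 1 ≠ 0 := by
          intro h0
          rw [h0] at hB1; simp at hB1; exact hB0 hB1
        have hABs : A * B = (B.coeff 1) • A := by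
          conv_lhs => rw [hB1]
          rw [mul_single_one]
        rw [hEv, hABs, restrict_smul]
        refine Submodule.smul_mem _ _ ?_
        refine IH a.val a.isLt (a.isLt.trans h) q hq ?_
        intro w hw
        refine hsupp w ?_
        rw [hEv, hABs, MonoidAlgebra.coeff_smul, Finsupp.support_smul_eq hc1]
        exact hw
      by_cases hAB0 : A * B = 0
      · rw [hEv, hAB0, restrict_zero]; exact Submodule.zero_mem _
      have hdim : q + 1 ≤ dA + dB := by
        obtain ⟨w₀, hw₀⟩ := Finsupp.support_nonempty_iff.mpr (mt MonoidAlgebra.coeff_eq_zero.mp hAB0)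
        have hw₀' := MonoidAlgebra.support_coeff_mul_subset A B hw₀
        rw [Finset.mem_mul] at hw₀'
        obtain ⟨u, hu, v, hv, huv⟩ := hw₀'
        have hlen : (FreeMonoid.toList w₀).length = dA + dB := by
          rw [← huv, FreeMonoid.toList_mul, List.length_append, hdA u hu, hdB v hv]
        have := hsupp w₀ (by rw [hEv]; exact hw₀)
        omega
      rcases lt_trichotomy q dA with hlt | heq | hgt
      · rw [hEv, restrict_mul_left hq (by omega) hdA]
        refine Submodule.smul_mem _ _ ?_
        refine IH a.val a.isLt (a.isLt.trans h) q hq ?_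
        intro w hw
        rw [hdA w hw]; omega
      · subst heq
        rw [hEv, restrict_mul_straddle hq hdA
          (fun w hw => by rw [hdB w hw]; omega)]
        refine Submodule.subset_span ?_
        refine ⟨⟨i, h⟩, ?_, ?_⟩
        · exact ⟨a, b, hg, nonconst_of_homog hA0 hdA hq,
            nonconst_of_homog hB0 hdB (by omega)⟩
        · rw [elem_mul hg]
      · rw [hEv, restrict_mul_right hgt hdA]
        refine Submodule.smul_mem _ _ ?_
        refine IH b.val b.isLt (b.isLt.trans h) (q - dA) (by omega) ?_
        intro w hw
        rw [hdB w hw]; omega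

lemma top_mem (c : NCCircuit F n) (hc : c.Homogeneous) (i₀ : Fin c.gates)
    (heval : c.eval i₀ = NCword (wlist n)) (p : Fin n × Fin n) :
    MonoidAlgebra.single (FreeMonoid.ofList [p.1, p.2]) (1 : F) ∈ SpanS c := by
  obtain ⟨i, j⟩ := p
  set q : ℕ := 2 * n * i.val + 2 * j.val + 1 with hqdef
  have hq1 : 1 ≤ q := by omega
  have hEv : c.evalAux i₀.val i₀.isLt = NCword (wlist n) := heval
  have hbound : q + 1 ≤ 2 * n * n := by
    have h1 : 2 * n * (i.val + 1) ≤ 2 * n * n := Nat.mul_le_mul_left _ i.isLt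
    have h2 : 2 * n * (i.val + 1) = 2 * n * i.val + 2 * n := by ring
    have h3 : j.val + 1 ≤ n := j.isLt
    omega
  have hsupp : ∀ w ∈ (c.evalAux i₀.val i₀.isLt).coeff.support,
      q + 1 ≤ (FreeMonoid.toList w).length := by
    intro w hw
    rw [hEv] at hw
    unfold NCword at hw
    rw [MonoidAlgebra.coeff_single, Finsupp.support_single_ne_zero _ (one_ne_zero)] at hw
    rw [Finset.mem_singleton] at hw
    subst hw
    rw [FreeMonoid.toList_ofList, wlist_length]
    exact hbound
  have hkey := key c hc i₀.val i₀.isLt q hq1 hsupp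
  rw [hEv] at hkey
  unfold NCword at hkey
  rw [restrict_take2] at hkey
  rw [MonoidAlgebra.mapDomain_single] at hkey
  rw [FreeMonoid.toList_ofList] at hkey
  have hq2 : q - 1 = 2 * n * i.val + 2 * j.val := by omega
  rw [hq2, wlist_window i j] at hkey
  exact hkey

theorem main_bound (c : NCCircuit F n) (hc : c.Homogeneous)
    (hcomp : ∃ i, c.eval i = NCword (wlist n)) :
    n ^ 2 ≤ c.nonScalarSize := by
  classical
  obtain ⟨i₀, heval⟩ := hcomp
  set v : Fin n × Fin n → NCPoly F n :=
    fun p => MonoidAlgebra.single (FreeMonoid.ofList [p.1, p.2]) (1 : F) with hvdef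
  have hv : ∀ p, v p ∈ SpanS c := fun p => top_mem c hc i₀ heval p
  have hinj : Function.Injective
      (fun p : Fin n × Fin n => FreeMonoid.ofList [p.1, p.2]) := by
    intro p p' hpp
    have := congrArg FreeMonoid.toList hpp
    rw [FreeMonoid.toList_ofList, FreeMonoid.toList_ofList] at this
    simp only [List.cons.injEq, and_true] at this
    exact Prod.ext this.1 this.2
  have hli : LinearIndependent F v := by
    have hb := (Finsupp.basisSingleOne (R := F) (ι := FreeMonoid (Fin n))).linearIndependent
    rw [Finsupp.coe_basisSingleOne] at hb
    exact (hb.comp _ hinj).map' (MonoidAlgebra.coeffLinearEquiv F).symm.toLinearMap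
      (MonoidAlgebra.coeffLinearEquiv F).symm.ker
  have hspan : Submodule.span F (Set.range v) ≤ SpanS c :=
    Submodule.span_le.mpr (by rintro _ ⟨p, rfl⟩; exact hv p)
  have hTfin : (elem c '' NSset c).Finite := (Set.toFinite _).image _
  haveI : FiniteDimensional F (SpanS c) := FiniteDimensional.span_of_finite F hTfin
  have h1 : Module.finrank F (Submodule.span F (Set.range v)) = n * n := by
    rw [finrank_span_eq_card hli]
    simp [Fintype.card_prod]
  have h2 : Module.finrank F (Submodule.span F (Set.range v)) ≤
      Module.finrank F (SpanS c) := Submodule.finrank_mono hspan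
  have h3 : Module.finrank F (SpanS c) ≤ (elem c '' NSset c).ncard := by
    haveI := hTfin.fintype
    rw [Set.ncard_eq_toFinset_card']
    exact finrank_span_le_card _
  have h4 : (elem c '' NSset c).ncard ≤ (NSset c).ncard :=
    Set.ncard_image_le (Set.toFinite _)
  have h5 : (NSset c).ncard = c.nonScalarSize := rfl
  have : n * n ≤ c.nonScalarSize := by omega
  rwa [pow_two]

end FieldPart

end NCAux

/-- Every homogeneous circuit computing the monomial
`f = x_1x_1 x_1x_2 ⋯ x_1x_n x_2x_1 ⋯ x_nx_n` of degree `2n²` (each pair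
`(i,j)` appearing as a consecutive block) contains at least `n²` non-scalar
product gates. -/
theorem monomial_pairs_lower_bound (F : Type) [Field F] (n : ℕ)
    (c : NCCircuit F n) (hc : c.Homogeneous)
    (hcomp : c.Computes
      (NCword ((List.finRange n).flatMap (fun i => (List.finRange n).flatMap (fun j => [i, j]))))) :
    n ^ 2 ≤ c.nonScalarSize := by
  exact NCAux.main_bound c hc hcomp
end

section
/- Every non-commutative monomial α of degree d in n > 1 variables can be computed by a circuit using only multiplication gates (hence automatically homogeneous) of size O(d·log n / log d): precompute all monomials of degree at most k by a circuit of size O(n^{k+1}), with k ≈ (log₂ d)/(2 log₂ n), and then multiply ⌈d/k⌉ of them together. -/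
def chunks {α : Type*} (k : ℕ) : List α → List (List α)
  | [] => []
  | a :: l => ((a :: l).take (k+1)) :: chunks k ((a :: l).drop (k+1))
  termination_by l => l.length
  decreasing_by simp

lemma chunks_join {α : Type*} (k : ℕ) (l : List α) : (chunks k l).flatten = l := by
  induction l using chunks.induct k with
  | case1 => simp [chunks]
  | case2 a l ih => rw [chunks]; simp only [List.drop_succ_cons] at ih; simp [ih]

lemma chunks_mem {α : Type*} (k : ℕ) (l : List α) :
    ∀ c ∈ chunks k l, c ≠ [] ∧ c.length ≤ k + 1 := by
  induction l using chunks.induct k with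
  | case1 => simp [chunks]
  | case2 a l ih =>
    rw [chunks]
    intro c hc
    rw [List.mem_cons] at hc
    rcases hc with rfl | hc
    · refine ⟨by simp, by simpa using List.length_take_le (k+1) (a :: l)⟩
    · exact ih c (by simpa using hc)

lemma chunks_length {α : Type*} (k : ℕ) (l : List α) :
    (chunks k l).length * (k+1) ≤ l.length + k := by
  induction l using chunks.induct k with
  | case1 => simp [chunks]
  | case2 a l ih =>
    rw [chunks]
    rcases Nat.lt_or_ge l.length k with h | h
    · have hd : List.drop k l = [] := List.drop_eq_nil_of_le (le_of_lt h)
      simp only [List.drop_succ_cons, hd, chunks]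
      simp
    · simp only [List.drop_succ_cons, List.length_cons, List.length_drop, add_mul, one_mul] at ih ⊢
      omega

lemma chunks_length_pos {α : Type*} (k : ℕ) (a : α) (l : List α) :
    0 < (chunks k (a :: l)).length := by rw [chunks]; simp
namespace MonUB

open NCCircuit

/-! ### Word codes (bijective base-n numeration) -/

def wcode (n : ℕ) (w : List (Fin n)) : ℕ := w.foldl (fun m a => n * m + a.val + 1) 0

lemma wcode_append (n : ℕ) (u : List (Fin n)) (a : Fin n) :
    wcode n (u ++ [a]) = n * wcode n u + a.val + 1 := by
  simp [wcode, List.foldl_append]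

lemma wcode_singleton (n : ℕ) (a : Fin n) : wcode n [a] = a.val + 1 := by
  simp [wcode]

lemma wcode_pos (n : ℕ) (w : List (Fin n)) (hw : w ≠ []) : 1 ≤ wcode n w := by
  rcases List.eq_nil_or_concat w with rfl | ⟨u, a, rfl⟩
  · exact absurd rfl hw
  · rw [List.concat_eq_append, wcode_append]; omega

def Egeom (n : ℕ) : ℕ → ℕ
  | 0 => 0
  | k+1 => n * Egeom n k + n

lemma Egeom_succ (n k : ℕ) : Egeom n (k+1) = n * Egeom n k + n := rfl

lemma Egeom_mono (n : ℕ) (hn : 1 ≤ n) : Monotone (Egeom n) := by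
  apply monotone_nat_of_le_succ
  intro k
  rw [Egeom_succ]
  induction k with
  | zero => simp [Egeom]
  | succ k ih =>
    rw [Egeom_succ]
    have := Nat.mul_le_mul_left n ih
    omega

lemma wcode_le_Egeom (n : ℕ) (w : List (Fin n)) : wcode n w ≤ Egeom n w.length := by
  induction w using List.reverseRecOn with
  | nil => simp [wcode, Egeom]
  | append_singleton u a ih =>
    rw [wcode_append]
    have h1 : n * wcode n u ≤ n * Egeom n u.length := Nat.mul_le_mul_left n ih
    have h2 : a.val + 1 ≤ n := a.isLt
    simp only [List.length_append, List.length_singleton, Egeom_succ]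
    omega

lemma Egeom_mul (p k : ℕ) : Egeom (p+1) k * p + (p+1) = (p+1)^(k+1) := by
  induction k with
  | zero => simp [Egeom]
  | succ k ih =>
    rw [Egeom_succ, pow_succ]
    nlinarith [ih]

lemma Egeom_le_two_pow (n k : ℕ) (hn : 2 ≤ n) : Egeom n k ≤ 2 * n^k := by
  obtain ⟨p, rfl⟩ : ∃ p, n = p + 1 := ⟨n - 1, by omega⟩
  have hp : 1 ≤ p := by omega
  have h := Egeom_mul p k
  have h2 : Egeom (p+1) k * p ≤ (p+1)^(k+1) := by omega
  have h3 : (p+1)^(k+1) ≤ 2 * p * (p+1)^k := by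
    rw [pow_succ, mul_comm ((p+1)^k) (p+1)]
    have hle : (p+1) ≤ 2 * p := by omega
    exact Nat.mul_le_mul_right _ hle
  have h4 : Egeom (p+1) k * p ≤ (2 * (p+1)^k) * p := by nlinarith [h2, h3]
  exact Nat.le_of_mul_le_mul_right h4 hp

end MonUB
namespace MonUB

variable {F : Type} [CommSemiring F] {n : ℕ}

lemma NCword_mul (u v : List (Fin n)) :
    (NCword u : NCPoly F n) * NCword v = NCword (u ++ v) := by
  simp [NCword, MonoidAlgebra.single_mul_single, FreeMonoid.ofList_append]

lemma NCvar_eq (a : Fin n) : (NCvar a : NCPoly F n) = NCword [a] := by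
  simp [NCvar, NCword, MonoidAlgebra.of_apply]

lemma evalAux_var (c : NCCircuit F n) (i : ℕ) (h : i < c.gates) (v : Fin n)
    (hg : c.gate ⟨i, h⟩ = .var v) : c.evalAux i h = NCvar v := by
  rw [NCCircuit.evalAux, hg]

lemma evalAux_mul (c : NCCircuit F n) (i : ℕ) (h : i < c.gates) (a b : Fin i)
    (hg : c.gate ⟨i, h⟩ = .mul a b) :
    c.evalAux i h = c.evalAux a.val (a.isLt.trans h) * c.evalAux b.val (b.isLt.trans h) := by
  rw [NCCircuit.evalAux, hg]

lemma evalAux_congr (c : NCCircuit F n) {i j : ℕ} (hij : i = j)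
    (hi : i < c.gates) (hj : j < c.gates) : c.evalAux i hi = c.evalAux j hj := by
  subst hij; rfl

/-- The dictionary-plus-chain circuit. -/
def dictCircuit (F : Type) {n : ℕ} (hn : 0 < n) (D : ℕ) (hnD : n ≤ D)
    (cs : List (List (Fin n))) (hc : ∀ j, wcode n (cs.getD j []) ≤ D) :
    NCCircuit F n where
  gates := D + (cs.length - 1)
  gate i :=
    if h1 : i.val < n then .var ⟨i.val, h1⟩
    else if h2 : i.val < D then
      .mul ⟨i.val / n - 1, by
              have := Nat.div_le_self i.val n; omega⟩
           ⟨i.val % n, by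
              have := Nat.mod_lt i.val hn; omega⟩
    else
      .mul ⟨if i.val = D then wcode n (cs.getD 0 []) - 1 else i.val - 1, by
              have h0 := hc 0
              split <;> omega⟩
           ⟨wcode n (cs.getD (i.val - D + 1) []) - 1, by
              have := hc (i.val - D + 1); omega⟩

end MonUB
namespace MonUB
variable {F : Type} [CommSemiring F] {n : ℕ}
lemma dictCircuit_eval_var (hn : 0 < n) (D : ℕ) (hnD : n ≤ D)
    (cs : List (List (Fin n))) (hc : ∀ j, wcode n (cs.getD j []) ≤ D)
    (a : Fin n) (h : a.val < D + (cs.length - 1)) :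
    (dictCircuit F hn D hnD cs hc).evalAux a.val h = NCword [a] := by
  have hgate : (dictCircuit F hn D hnD cs hc).gate ⟨a.val, h⟩ = .var a := by
    simp [dictCircuit, a.isLt]
  rw [evalAux_var _ _ _ _ hgate, NCvar_eq]

lemma dictCircuit_eval_word (hn : 0 < n) (D : ℕ) (hnD : n ≤ D)
    (cs : List (List (Fin n))) (hc : ∀ j, wcode n (cs.getD j []) ≤ D)
    (w : List (Fin n)) (hw : w ≠ []) (hwD : wcode n w ≤ D)
    (h : wcode n w - 1 < D + (cs.length - 1)) :
    (dictCircuit F hn D hnD cs hc).evalAux (wcode n w - 1) h = NCword w := by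
  induction w using List.reverseRecOn with
  | nil => exact absurd rfl hw
  | append_singleton u a ih =>
    have hkey : wcode n (u ++ [a]) = n * wcode n u + a.val + 1 := wcode_append n u a
    by_cases hune : u = []
    · subst hune
      have hcode : wcode n ([] ++ [a]) - 1 = a.val := by
        simp [wcode]
      rw [evalAux_congr _ hcode h (by show a.val < D + (cs.length - 1); omega)]
      exact dictCircuit_eval_var hn D hnD cs hc a _
    · have hcu : 1 ≤ wcode n u := wcode_pos n u hune
      have hle : wcode n u ≤ n * wcode n u := Nat.le_mul_of_pos_left _ hn
      have hidx : wcode n (u ++ [a]) - 1 = n * wcode n u + a.val := by omega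
      have hmulge : n * 1 ≤ n * wcode n u := Nat.mul_le_mul_left n hcu
      have hj : n * wcode n u + a.val < D + (cs.length - 1) := by omega
      rw [evalAux_congr _ hidx h hj]
      have hni : ¬ n * wcode n u + a.val < n := by omega
      have hiD : n * wcode n u + a.val < D := by omega
      have hdiv : (n * wcode n u + a.val) / n = wcode n u := by
        rw [Nat.mul_add_div hn, Nat.div_eq_of_lt a.isLt, Nat.add_zero]
      have hmod : (n * wcode n u + a.val) % n = a.val := by
        rw [Nat.mul_add_mod, Nat.mod_eq_of_lt a.isLt]
      have hgate : (dictCircuit F hn D hnD cs hc).gate ⟨n * wcode n u + a.val, hj⟩ =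
          .mul ⟨wcode n u - 1, by show wcode n u - 1 < n * wcode n u + a.val; omega⟩
               ⟨a.val, by show a.val < n * wcode n u + a.val; omega⟩ := by
        simp only [dictCircuit, dif_neg hni, dif_pos hiD]
        congr 1 <;> apply Fin.ext <;> simp [hdiv, hmod]
      rw [evalAux_mul _ _ _ _ _ hgate]
      have huD : wcode n u ≤ D := by omega
      dsimp only
      refine (congrArg₂ (· * ·) (ih hune huD _) (dictCircuit_eval_var hn D hnD cs hc a _)).trans ?_
      rw [NCword_mul]

lemma dictCircuit_eval_chain (hn : 0 < n) (D : ℕ) (hnD : n ≤ D)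
    (cs : List (List (Fin n))) (hc : ∀ j, wcode n (cs.getD j []) ≤ D)
    (hne : ∀ c ∈ cs, c ≠ []) :
    ∀ j, j + 2 ≤ cs.length → ∀ h : D + j < D + (cs.length - 1),
      (dictCircuit F hn D hnD cs hc).evalAux (D + j) h =
        NCword ((cs.take (j+2)).flatten) := by
  have hmem : ∀ j, j < cs.length → cs.getD j [] ∈ cs := fun j hj => by
    rw [List.getD_eq_getElem _ _ hj]; exact List.getElem_mem _
  have hflat : ∀ j, j + 1 ≤ cs.length →
      (cs.take (j+1)).flatten = (cs.take j).flatten ++ cs.getD j [] := by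
    intro j hj
    rw [List.take_succ, List.getElem?_eq_getElem hj, List.getD_eq_getElem _ _ hj]
    simp only [Option.toList_some, List.flatten_append, List.flatten_cons, List.flatten_nil,
      List.append_nil]
  intro j
  induction j with
  | zero =>
    intro hlen h
    have hni : ¬ D + 0 < n := by omega
    have hniD : ¬ D + 0 < D := by omega
    have h0 : wcode n (cs.getD 0 []) ≤ D := hc 0
    have h1 : wcode n (cs.getD 1 []) ≤ D := hc 1
    have hc0 : cs.getD 0 [] ≠ [] := hne _ (hmem 0 (by omega))
    have hc1 : cs.getD 1 [] ≠ [] := hne _ (hmem 1 (by omega))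
    have hp0 := wcode_pos n _ hc0
    have hp1 := wcode_pos n _ hc1
    have hgate : (dictCircuit F hn D hnD cs hc).gate ⟨D + 0, h⟩ =
        .mul ⟨wcode n (cs.getD 0 []) - 1,
                by show wcode n (cs.getD 0 []) - 1 < D + 0; omega⟩
             ⟨wcode n (cs.getD 1 []) - 1,
                by show wcode n (cs.getD 1 []) - 1 < D + 0; omega⟩ := by
      simp only [dictCircuit, dif_neg hni, dif_neg hniD]
      congr 1 <;> apply Fin.ext
      · show (if D + 0 = D then wcode n (cs.getD 0 []) - 1 else D + 0 - 1) = _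
        rw [if_pos (by omega)]
      · show wcode n (cs.getD (D + 0 - D + 1) []) - 1 = wcode n (cs.getD 1 []) - 1
        have e1 : D + 0 - D + 1 = 1 := by omega
        rw [e1]
    rw [evalAux_mul _ _ _ _ _ hgate]
    dsimp only
    refine (congrArg₂ (· * ·) (dictCircuit_eval_word hn D hnD cs hc _ hc0 h0 _)
      (dictCircuit_eval_word hn D hnD cs hc _ hc1 h1 _)).trans ?_
    rw [NCword_mul]
    congr 1
    rw [hflat 1 (by omega), hflat 0 (by omega)]
    simp
  | succ j ih =>
    intro hlen h
    have hni : ¬ D + (j+1) < n := by omega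
    have hniD : ¬ D + (j+1) < D := by omega
    have hJ : wcode n (cs.getD (j+2) []) ≤ D := hc (j+2)
    have hcJ : cs.getD (j+2) [] ≠ [] := hne _ (hmem (j+2) (by omega))
    have hpJ := wcode_pos n _ hcJ
    have hgate : (dictCircuit F hn D hnD cs hc).gate ⟨D + (j+1), h⟩ =
        .mul ⟨D + j, by show D + j < D + (j+1); omega⟩
             ⟨wcode n (cs.getD (j+2) []) - 1,
                by show wcode n (cs.getD (j+2) []) - 1 < D + (j+1); omega⟩ := by
      simp only [dictCircuit, dif_neg hni, dif_neg hniD]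
      congr 1 <;> apply Fin.ext
      · show (if D + (j+1) = D then wcode n (cs.getD 0 []) - 1 else D + (j+1) - 1) = D + j
        rw [if_neg (by omega)]
        omega
      · show wcode n (cs.getD (D + (j+1) - D + 1) []) - 1 = wcode n (cs.getD (j+2) []) - 1
        have e1 : D + (j+1) - D + 1 = j + 2 := by omega
        rw [e1]
    rw [evalAux_mul _ _ _ _ _ hgate]
    dsimp only
    refine (congrArg₂ (· * ·) (ih (by omega) _)
      (dictCircuit_eval_word hn D hnD cs hc _ hcJ hJ _)).trans ?_
    rw [NCword_mul]
    congr 1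
    rw [show j+1+2 = (j+2)+1 from rfl, hflat (j+2) (by omega)]

lemma dictCircuit_mulOnly (hn : 0 < n) (D : ℕ) (hnD : n ≤ D)
    (cs : List (List (Fin n))) (hc : ∀ j, wcode n (cs.getD j []) ≤ D) :
    (dictCircuit F hn D hnD cs hc).MulOnly := by
  intro i
  simp only [dictCircuit]
  split_ifs with h1 h2 h3
  · exact Or.inl ⟨_, rfl⟩
  all_goals exact Or.inr ⟨_, _, rfl⟩

lemma size_le_of_var_lt (c : NCCircuit F n) (t : ℕ)
    (h : ∀ i : Fin c.gates, i.val < t → ∃ v, c.gate i = GateOp.var v) :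
    c.size ≤ c.gates - t := by
  classical
  rw [NCCircuit.size]
  have hsub : {i : Fin c.gates | (∃ a b, c.gate i = GateOp.add a b) ∨
      (∃ a b, c.gate i = GateOp.mul a b)} ⊆
      ↑((Finset.univ : Finset (Fin c.gates)).filter fun i => t ≤ i.val) := by
    intro i hi
    simp only [Finset.coe_filter, Set.mem_setOf_eq, Finset.mem_univ, true_and]
    by_contra hlt
    obtain ⟨v, hv⟩ := h i (by omega)
    rcases hi with ⟨a, b, hab⟩ | ⟨a, b, hab⟩ <;> rw [hv] at hab <;> cases hab
  have h1 : {i : Fin c.gates | (∃ a b, c.gate i = GateOp.add a b) ∨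
      (∃ a b, c.gate i = GateOp.mul a b)}.ncard ≤
      ((Finset.univ : Finset (Fin c.gates)).filter fun i => t ≤ i.val).card := by
    rw [← Set.ncard_coe_finset]
    exact Set.ncard_le_ncard hsub (Finset.finite_toSet _)
  have h2 : ((Finset.univ : Finset (Fin c.gates)).filter fun i => t ≤ i.val).card ≤
      (Finset.range (c.gates - t)).card := by
    apply Finset.card_le_card_of_injOn (fun i => i.val - t)
    · intro i hi
      simp only [Finset.mem_coe, Finset.mem_filter, Finset.mem_univ, true_and] at hi
      simp only [Finset.mem_coe, Finset.mem_range]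
      have := i.isLt
      omega
    · intro i hi j hj hij
      simp only [Finset.coe_filter, Set.mem_setOf_eq, Finset.mem_univ, true_and] at hi hj
      simp only at hij
      apply Fin.ext
      omega
  rw [Finset.card_range] at h2
  exact h1.trans h2
end MonUB
namespace MonUB
variable {F : Type} [CommSemiring F] {n : ℕ}

lemma main_construction (F : Type) [CommSemiring F] {n : ℕ} (hn : 0 < n)
    (k : ℕ) (w : List (Fin n)) (hw : w ≠ []) :
    ∃ (c : NCCircuit F n) (m : ℕ), c.MulOnly ∧ c.Computes (NCword w) ∧
      m * (k+1) ≤ w.length + k ∧ c.size + n ≤ Egeom n (k+1) + m := by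
  classical
  set cs : List (List (Fin n)) := chunks k w with hcs
  set D : ℕ := Egeom n (k+1) with hD
  have hmemchunks := chunks_mem k w
  have hnD : n ≤ D := by
    have h1 : Egeom n 1 = n := by simp [Egeom]
    have := Egeom_mono n hn (show 1 ≤ k+1 by omega)
    omega
  have hc : ∀ j, wcode n (cs.getD j []) ≤ D := by
    intro j
    by_cases hj : j < cs.length
    · have hmem : cs.getD j [] ∈ cs := by
        rw [List.getD_eq_getElem _ _ hj]; exact List.getElem_mem _
      have hlen : (cs.getD j []).length ≤ k + 1 := (hmemchunks _ hmem).2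
      calc wcode n (cs.getD j []) ≤ Egeom n (cs.getD j []).length := wcode_le_Egeom n _
        _ ≤ Egeom n (k+1) := Egeom_mono n hn hlen
    · rw [List.getD_eq_default _ _ (by omega)]
      simp [wcode]
  have hgates : (dictCircuit F hn D hnD cs hc : NCCircuit F n).gates = D + (cs.length - 1) := rfl
  have hjoin : cs.flatten = w := chunks_join k w
  have hne : ∀ x ∈ cs, x ≠ [] := fun x hx => (hmemchunks x hx).1
  have hlenpos : 0 < cs.length := by
    rcases w with _ | ⟨a, l⟩
    · exact absurd rfl hw
    · exact chunks_length_pos k a l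
  refine ⟨dictCircuit F hn D hnD cs hc, cs.length, dictCircuit_mulOnly hn D hnD cs hc, ?_, ?_, ?_⟩
  · -- Computes
    rcases Nat.lt_or_ge cs.length 2 with hm1 | hm2
    · -- exactly one chunk
      have hm : cs.length = 1 := by omega
      obtain ⟨c0, hc0⟩ := List.length_eq_one_iff.mp hm
      have hc0ne : c0 ≠ [] := hne c0 (by simp [hc0])
      have hc0D : wcode n c0 ≤ D := by have h := hc 0; rw [hc0] at h; simpa using h
      have hp0 : 1 ≤ wcode n c0 := wcode_pos n c0 hc0ne
      have hidx : wcode n c0 - 1 < (dictCircuit F hn D hnD cs hc : NCCircuit F n).gates := by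
        rw [hgates]; omega
      refine ⟨⟨wcode n c0 - 1, hidx⟩, ?_⟩
      show (dictCircuit F hn D hnD cs hc).evalAux (wcode n c0 - 1) hidx = NCword w
      rw [dictCircuit_eval_word hn D hnD cs hc c0 hc0ne hc0D hidx]
      congr 1
      rw [← hjoin, hc0]
      simp
    · have hidx : D + (cs.length - 2) < (dictCircuit F hn D hnD cs hc : NCCircuit F n).gates := by
        rw [hgates]; omega
      refine ⟨⟨D + (cs.length - 2), hidx⟩, ?_⟩
      show (dictCircuit F hn D hnD cs hc).evalAux (D + (cs.length - 2)) hidx = NCword w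
      rw [dictCircuit_eval_chain hn D hnD cs hc hne (cs.length - 2) (by omega) hidx]
      congr 1
      rw [show cs.length - 2 + 2 = cs.length by omega, List.take_length, hjoin]
  · -- chunk count
    have := chunks_length k w
    rw [← hcs] at this
    omega
  · -- size
    have hvar : ∀ i : Fin (dictCircuit F hn D hnD cs hc : NCCircuit F n).gates, i.val < n →
        ∃ v, (dictCircuit F hn D hnD cs hc).gate i = GateOp.var v := by
      intro i hi
      exact ⟨⟨i.val, hi⟩, by simp [dictCircuit, hi]⟩
    have := size_le_of_var_lt (dictCircuit F hn D hnD cs hc) n hvar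
    rw [hgates] at this
    omega

end MonUB
/-- Every non-commutative monomial of degree `d` in `n > 1` variables can be
computed by a circuit using only multiplication gates (hence automatically
homogeneous) of size `O(d · log n / log d)`. -/
theorem monomial_upper_bound (F : Type) [Field F] :
    ∃ C : ℝ, 0 < C ∧ ∀ (n d : ℕ), 1 < n → 1 < d → ∀ σ : Fin d → Fin n,
      ∃ c : NCCircuit F n, c.MulOnly ∧
        c.Computes (NCword ((List.finRange d).map σ)) ∧
        (c.size : ℝ) ≤ C * d * Real.log n / Real.log d := by
  classical
  refine ⟨100, by norm_num, ?_⟩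
  intro n d hn hd σ
  set w : List (Fin n) := (List.finRange d).map σ with hw
  have hwlen : w.length = d := by simp [hw]
  have hwne : w ≠ [] := by
    intro h
    rw [h] at hwlen
    simp at hwlen
    omega
  set L := Nat.log n d with hL
  set k : ℕ := if L ≤ 3 then 0 else L / 2 - 1 with hk
  obtain ⟨c, m, hmul, hcomp, hcount, hsize⟩ := MonUB.main_construction F (by omega) k w hwne
  clear_value w L k
  refine ⟨c, hmul, hcomp, ?_⟩
  have hn1 : (1:ℝ) < n := by exact_mod_cast hn
  have hd1 : (1:ℝ) < d := by exact_mod_cast hd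
  have hlogn : 0 < Real.log n := Real.log_pos hn1
  have hlogd : 0 < Real.log d := Real.log_pos hd1
  have hdpow : d < n^(L+1) := by rw [hL]; exact Nat.lt_pow_succ_log_self hn d
  have hlogdle : Real.log d ≤ ((L:ℝ)+1) * Real.log n := by
    have h1 : (d:ℝ) ≤ (n:ℝ)^(L+1) := by exact_mod_cast hdpow.le
    calc Real.log d ≤ Real.log ((n:ℝ)^(L+1)) := Real.log_le_log (by positivity) h1
      _ = ((L:ℝ)+1) * Real.log n := by rw [Real.log_pow]; push_cast; ring
  rw [le_div_iff₀ hlogd]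
  rcases le_or_gt L 3 with hL3 | hL3
  · -- small case : naive chain
    have hk0 : k = 0 := by rw [hk, if_pos hL3]
    rw [hk0] at hsize hcount
    have hE1 : MonUB.Egeom n (0+1) = n := by simp [MonUB.Egeom]
    rw [hE1] at hsize
    rw [hwlen] at hcount
    have hsled : c.size ≤ d := by omega
    have h4 : Real.log d ≤ 4 * Real.log n := by
      have hL4 : ((L:ℝ)+1) ≤ 4 := by
        have : L + 1 ≤ 4 := by omega
        exact_mod_cast this
      have t := mul_le_mul_of_nonneg_right hL4 hlogn.le
      linarith
    have hcs : (c.size:ℝ) ≤ (d:ℝ) := by exact_mod_cast hsled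
    have hd0 : (0:ℝ) ≤ (d:ℝ) := by positivity
    calc (c.size:ℝ) * Real.log d ≤ (d:ℝ) * Real.log d :=
          mul_le_mul_of_nonneg_right hcs hlogd.le
      _ ≤ (d:ℝ) * (4*Real.log n) := mul_le_mul_of_nonneg_left h4 hd0
      _ ≤ 100 * (d:ℝ) * Real.log n := by
          have t : (0:ℝ) ≤ (d:ℝ)*Real.log n := mul_nonneg hd0 hlogn.le
          linarith
  · -- big case
    have hL4 : 4 ≤ L := by omega
    have hne3 : ¬ L ≤ 3 := by omega
    have hk1 : k + 1 = L / 2 := by rw [hk, if_neg hne3]; omega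
    have hnL : n ^ L ≤ d := by rw [hL]; exact Nat.pow_log_le_self n (by omega)
    have h2k : n^(k+1) * n^(k+1) ≤ d := by
      have h1 : n^(k+1) * n^(k+1) = n^(2*(k+1)) := by ring
      have h2 : 2*(k+1) ≤ L := by omega
      calc n^(k+1)*n^(k+1) = n^(2*(k+1)) := h1
        _ ≤ n^L := Nat.pow_le_pow_right (by omega) h2
        _ ≤ d := hnL
    have hdnn : (0:ℝ) ≤ (d:ℝ) := by positivity
    have hss : Real.sqrt d * Real.sqrt d = d := Real.mul_self_sqrt hdnn
    have hsnn : (0:ℝ) ≤ Real.sqrt d := Real.sqrt_nonneg _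
    have hNr : ((n:ℝ))^(k+1) ≤ Real.sqrt d := by
      have h1 : ((n:ℝ))^(k+1) * ((n:ℝ))^(k+1) ≤ (d:ℝ) := by exact_mod_cast h2k
      have h2 : (0:ℝ) ≤ (n:ℝ)^(k+1) := by positivity
      nlinarith [h1, h2, hss, hsnn]
    have h16 : (16:ℕ) ≤ d := by
      have h1 : 2^4 ≤ n^4 := Nat.pow_le_pow_left (by omega : 2 ≤ n) 4
      have h2 : n^4 ≤ n^L := Nat.pow_le_pow_right (by omega) hL4
      norm_num at h1
      omega
    have hd16 : (16:ℝ) ≤ (d:ℝ) := by exact_mod_cast h16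
    have hs4 : (4:ℝ) ≤ Real.sqrt d := by nlinarith [hss, hsnn, hd16]
    have hs1 : (1:ℝ) ≤ Real.sqrt d := by linarith
    have hlogd2s : Real.log d ≤ 2 * Real.sqrt d := by
      have h1 : Real.log (Real.sqrt d) = Real.log d / 2 := Real.log_sqrt hdnn
      have h2 : Real.log (Real.sqrt d) ≤ Real.sqrt d - 1 :=
        Real.log_le_sub_one_of_pos (by linarith)
      linarith
    have h2Ld : (2:ℝ)^L ≤ (d:ℝ) := by
      have h1 : 2^L ≤ n^L := Nat.pow_le_pow_left (by omega : 2 ≤ n) L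
      exact_mod_cast h1.trans hnL
    have hLlog : (L:ℝ) * Real.log 2 ≤ Real.log d := by
      calc (L:ℝ)*Real.log 2 = Real.log ((2:ℝ)^L) := by rw [Real.log_pow]
        _ ≤ Real.log d := Real.log_le_log (by positivity) h2Ld
    have hlog2 : (0.5:ℝ) ≤ Real.log 2 :=
      le_of_lt (lt_trans (by norm_num) Real.log_two_gt_d9)
    have hLnn : (0:ℝ) ≤ (L:ℝ) := by positivity
    have hL2logd : (L:ℝ) ≤ 2 * Real.log d := by
      have t : (L:ℝ)*(0.5) ≤ (L:ℝ)*Real.log 2 := mul_le_mul_of_nonneg_left hlog2 hLnn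
      linarith [t, hLlog]
    have hL5 : ((L:ℝ)+1) ≤ 5 * Real.sqrt d := by linarith [hL2logd, hlogd2s, hs1]
    have hk4 : ((L:ℝ)+1) ≤ 4*((k:ℝ)+1) := by
      have h1 : L + 1 ≤ 4*(k+1) := by omega
      exact_mod_cast h1
    have hEle : MonUB.Egeom n (k+1) ≤ 2 * n^(k+1) := MonUB.Egeom_le_two_pow n (k+1) hn
    have hsizer : (c.size:ℝ) ≤ 2*(n:ℝ)^(k+1) + m := by
      have hnat : c.size ≤ 2*n^(k+1) + m := by omega
      exact_mod_cast hnat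
    have hkpos : (0:ℝ) < (k:ℝ)+1 := by positivity
    have hX : (d:ℝ)/((k:ℝ)+1)*((k:ℝ)+1) = (d:ℝ) := div_mul_cancel₀ _ (ne_of_gt hkpos)
    have hmr : (m:ℝ) ≤ (d:ℝ)/((k:ℝ)+1) + 1 := by
      have h1 : (m:ℝ)*((k:ℝ)+1) ≤ (d:ℝ) + (k:ℝ) := by
        rw [hwlen] at hcount
        exact_mod_cast hcount
      have h2 : ((m:ℝ) - 1) * ((k:ℝ)+1) ≤ (d:ℝ) := by
        have h1' : (m:ℝ)*(k:ℝ) + (m:ℝ) ≤ (d:ℝ) + (k:ℝ) := by ring_nf at h1 ⊢; linarith [h1]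
        have expand : ((m:ℝ) - 1) * ((k:ℝ)+1) = (m:ℝ)*(k:ℝ) + (m:ℝ) - (k:ℝ) - 1 := by ring
        rw [expand]
        linarith [h1']
      have h3 := (le_div_iff₀ hkpos).mpr h2
      linarith
    have hfs : (c.size:ℝ) ≤ 3*Real.sqrt d + (d:ℝ)/((k:ℝ)+1) := by linarith
    have hA1 : 3*Real.sqrt d * Real.log d ≤ 15*(d:ℝ)*Real.log n := by
      have t1 : 3*Real.sqrt d * Real.log d ≤ 3*Real.sqrt d * (((L:ℝ)+1) * Real.log n) :=
        mul_le_mul_of_nonneg_left hlogdle (by linarith)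
      have t2 : ((L:ℝ)+1) * Real.log n ≤ (5*Real.sqrt d) * Real.log n :=
        mul_le_mul_of_nonneg_right hL5 hlogn.le
      have t3 : 3*Real.sqrt d * (((L:ℝ)+1) * Real.log n) ≤
          3*Real.sqrt d * ((5*Real.sqrt d) * Real.log n) :=
        mul_le_mul_of_nonneg_left t2 (by linarith)
      have t4 : 3*Real.sqrt d * ((5*Real.sqrt d) * Real.log n) =
          15*(Real.sqrt d * Real.sqrt d)*Real.log n := by ring
      rw [hss] at t4
      linarith
    have hA2 : (d:ℝ)/((k:ℝ)+1) * Real.log d ≤ 4*(d:ℝ)*Real.log n := by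
      have hld4k : Real.log d ≤ 4*((k:ℝ)+1)*Real.log n := by
        have t := mul_le_mul_of_nonneg_right hk4 hlogn.le
        linarith
      have hXnn : (0:ℝ) ≤ (d:ℝ)/((k:ℝ)+1) := by positivity
      calc (d:ℝ)/((k:ℝ)+1) * Real.log d ≤ (d:ℝ)/((k:ℝ)+1) * (4*((k:ℝ)+1)*Real.log n) :=
            mul_le_mul_of_nonneg_left hld4k hXnn
        _ = 4*((d:ℝ)/((k:ℝ)+1)*((k:ℝ)+1))*Real.log n := by ring
        _ = 4*(d:ℝ)*Real.log n := by rw [hX]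
    calc (c.size:ℝ)*Real.log d ≤ (3*Real.sqrt d + (d:ℝ)/((k:ℝ)+1))*Real.log d :=
          mul_le_mul_of_nonneg_right hfs hlogd.le
      _ = 3*Real.sqrt d*Real.log d + (d:ℝ)/((k:ℝ)+1)*Real.log d := by ring
      _ ≤ 15*(d:ℝ)*Real.log n + 4*(d:ℝ)*Real.log n := by linarith
      _ ≤ 100 * (d:ℝ) * Real.log n := by
          have t : (0:ℝ) ≤ (d:ℝ)*Real.log n := mul_nonneg hdnn hlogn.le
          linarith
end

section
/- Let 1 < k < n. For i ∈ [n−k] and j ∈ [k−1], let f_{i,j} := (E_{n-i}^{k}(x_{i+1},...,x_n))^{[j,j+1]}, the degree-2 polynomial obtained by restricting to positions j and j+1 of each monomial. Then the (n−k)(k−1) polynomials f_{i,j} are linearly independent over F. -/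
section AuxEsym

lemma sorted_lt_val_add_le {n : ℕ} {L : List (Fin n)} (hL : L.Pairwise (· < ·))
    {a b : ℕ} (hab : a ≤ b) (hb : b < L.length) :
    (L[a]'(lt_of_le_of_lt hab hb)).val + (b - a) ≤ (L[b]'hb).val := by
  obtain ⟨d, rfl⟩ := Nat.exists_eq_add_of_le hab
  induction d with
  | zero => simp
  | succ d ih =>
    have h1 : a + d < L.length := by omega
    have := ih (by omega) h1
    have hlt : (L[a+d]'h1) < L[a + (d+1)]'hb := by
      have := hL.rel_get_of_lt (a := ⟨a+d, h1⟩) (b := ⟨a+(d+1), hb⟩)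
        (by simp [Fin.lt_def])
      simpa [List.get_eq_getElem] using this
    have : (L[a+d]'h1).val < (L[a+(d+1)]'hb).val := hlt
    omega

lemma take_two_drop {α : Type*} (L : List α) (j : ℕ) (h : j + 1 < L.length) :
    (L.drop j).take 2 = [L[j]'(by omega), L[j+1]'h] := by
  rw [List.drop_eq_getElem_cons (by omega : j < L.length),
    List.drop_eq_getElem_cons (by simpa using h : j + 1 < L.length)]
  rfl

lemma coeff_restrict (F : Type) [Field F] {n : ℕ} (m j k : ℕ) (u v : Fin n) :
    (NCrestrict (j+1) (j+2) (esymAbove F n m k)).coeff (FreeMonoid.ofList [u, v]) =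
    (((((Finset.univ : Finset (Fin n)).filter (fun x => m ≤ x.val)).powersetCard k).filter
      (fun s => ((s.sort (· ≤ ·)).drop j).take 2 = [u, v])).card : F) := by
  classical
  have h2 : j + 2 + 1 - (j + 1) = 2 := by omega
  rw [NCrestrict, MonoidAlgebra.coeff_ofCoeff, esymAbove, MonoidAlgebra.coeff_sum,
    Finsupp.mapDomain_finset_sum]
  simp only [h2, Nat.add_sub_cancel, MonoidAlgebra.coeff_single, Finsupp.mapDomain_single, FreeMonoid.toList_ofList]
  rw [Finsupp.finset_sum_apply]
  simp only [Finsupp.single_apply, EmbeddingLike.apply_eq_iff_eq]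
  rw [Finset.sum_boole]

/-- Basic facts extracted from membership in the filtered set. -/
lemma filter_bounds {n k m j : ℕ} {u v : Fin n} {s : Finset (Fin n)}
    (hjk : j + 2 ≤ k)
    (hs : s ∈ ((Finset.univ : Finset (Fin n)).filter (fun x => m ≤ x.val)).powersetCard k)
    (hc : ((s.sort (· ≤ ·)).drop j).take 2 = [u, v]) :
    m + j ≤ u.val ∧ v.val + (k - j - 2) + 1 ≤ n := by
  obtain ⟨hsub, hcard⟩ := Finset.mem_powersetCard.mp hs
  set L := s.sort (· ≤ ·) with hLdef
  have hlen : L.length = k := by simp [hLdef, hcard]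
  have hsor : L.Pairwise (· < ·) := List.sortedLT_iff_pairwise.mp (Finset.sortedLT_sort s)
  have hj1 : j + 1 < L.length := by omega
  rw [take_two_drop L j hj1] at hc
  have hu : (L[j]'(by omega)) = u := by simpa using congrArg (fun l => l.head?) hc
  have hv : (L[j+1]'hj1) = v := by
    have := congrArg (fun l => l.tail.head?) hc
    simpa using this
  have hmem : ∀ x ∈ L, m ≤ x.val := by
    intro x hx
    have : x ∈ s := by rwa [hLdef, Finset.mem_sort] at hx
    have := hsub this
    simpa using (Finset.mem_filter.mp this).2
  constructor
  · have h0 : (0:ℕ) < L.length := by omega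
    have hm0 : m ≤ (L[0]'h0).val := hmem _ (by simp [List.getElem_mem])
    have := sorted_lt_val_add_le hsor (Nat.zero_le j) (by omega : j < L.length)
    rw [hu] at this
    omega
  · have hk1 : k - 1 < L.length := by omega
    have := sorted_lt_val_add_le hsor (by omega : j + 1 ≤ k - 1) hk1
    rw [hv] at this
    have := (L[k-1]'hk1).isLt
    omega

lemma diag_card {n : ℕ} (k m j : ℕ) (hjk : j + 2 ≤ k) (hmk : m + k ≤ n) (hm : 1 ≤ m)
    (u v : Fin n) (hu : u.val = m + j) (hv : v.val = n - k + j + 1) :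
    ((((Finset.univ : Finset (Fin n)).filter (fun x => m ≤ x.val)).powersetCard k).filter
      (fun s => ((s.sort (· ≤ ·)).drop j).take 2 = [u, v])).card = 1 := by
  classical
  have hg : ∀ t < k, (if t ≤ j then m + t else n - k + t) < n := by
    intro t ht; split <;> omega
  set f : Fin k → Fin n := fun t => ⟨if t.val ≤ j then m + t.val else n - k + t.val,
    hg t.val t.isLt⟩ with hfdef
  have hfmono : ∀ a b : Fin k, a < b → f a < f b := by
    intro a b hab
    simp only [hfdef, Fin.mk_lt_mk, Fin.lt_def] at *
    split <;> split <;> omega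
  set L0 : List (Fin n) := List.ofFn f with hL0def
  have hL0len : L0.length = k := by simp [hL0def]
  have hL0sorted : L0.Pairwise (· < ·) := by
    rw [hL0def, List.pairwise_ofFn]
    intro a b hab; exact hfmono a b hab
  have hL0nodup : L0.Nodup := hL0sorted.nodup
  set S0 : Finset (Fin n) := L0.toFinset with hS0def
  have hsortS0 : S0.sort (· ≤ ·) = L0 :=
    (List.toFinset_sort (· ≤ ·) hL0nodup).mpr (hL0sorted.imp le_of_lt)
  have hgetL0 : ∀ (t : ℕ) (ht : t < L0.length),
      (L0[t]'ht).val = if t ≤ j then m + t else n - k + t := by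
    intro t ht
    simp [hL0def, hfdef]
  rw [Finset.card_eq_one]
  refine ⟨S0, ?_⟩
  rw [Finset.eq_singleton_iff_unique_mem]
  constructor
  · rw [Finset.mem_filter]
    constructor
    · rw [Finset.mem_powersetCard]
      constructor
      · intro x hx
        rw [hS0def, List.mem_toFinset, hL0def, List.mem_ofFn] at hx
        obtain ⟨t, rfl⟩ := hx
        simp only [Finset.mem_filter, Finset.mem_univ, true_and, hfdef]
        split <;> omega
      · rw [hS0def, List.toFinset_card_of_nodup hL0nodup, hL0len]
    · rw [hsortS0, take_two_drop L0 j (by omega)]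
      have h1 : (L0[j]'(by omega)) = u := by
        apply Fin.ext; rw [hgetL0 j (by omega), hu]; simp
      have h2 : (L0[j+1]'(by omega)) = v := by
        apply Fin.ext; rw [hgetL0 (j+1) (by omega), hv]
        rw [if_neg (by omega)]; omega
      rw [h1, h2]
  · intro s hs
    rw [Finset.mem_filter] at hs
    obtain ⟨hs1, hc⟩ := hs
    obtain ⟨hsub, hcard⟩ := Finset.mem_powersetCard.mp hs1
    set L := s.sort (· ≤ ·) with hLdef
    have hlen : L.length = k := by simp [hLdef, hcard]
    have hsor : L.Pairwise (· < ·) := List.sortedLT_iff_pairwise.mp (Finset.sortedLT_sort s)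
    have hj1 : j + 1 < L.length := by omega
    rw [take_two_drop L j hj1] at hc
    have hcu : (L[j]'(by omega)) = u := by simpa using congrArg (fun l => l.head?) hc
    have hcv : (L[j+1]'hj1) = v := by
      have := congrArg (fun l => l.tail.head?) hc
      simpa using this
    have hmem : ∀ x ∈ L, m ≤ x.val := by
      intro x hx
      have : x ∈ s := by rwa [hLdef, Finset.mem_sort] at hx
      have := hsub this
      simpa using (Finset.mem_filter.mp this).2
    have hLL0 : L = L0 := by
      apply List.ext_getElem (by omega)
      intro t ht ht0
      apply Fin.ext
      rw [hgetL0 t ht0]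
      by_cases htj : t ≤ j
      · have h0 : (0:ℕ) < L.length := by omega
        have hm0 : m ≤ (L[0]'h0).val := hmem _ (by simp [List.getElem_mem])
        have hA := sorted_lt_val_add_le hsor (Nat.zero_le t) ht
        have hB := sorted_lt_val_add_le hsor htj (by omega : j < L.length)
        rw [hcu] at hB
        rw [if_pos htj]
        omega
      · have hk1 : k - 1 < L.length := by omega
        have hA := sorted_lt_val_add_le hsor (by omega : j + 1 ≤ t) ht
        rw [hcv] at hA
        have hB := sorted_lt_val_add_le hsor (by omega : t ≤ k - 1) hk1
        have hlt := (L[k-1]'hk1).isLt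
        rw [if_neg htj]
        omega
    rw [hS0def, ← hLL0, hLdef, Finset.sort_toFinset]

end AuxEsym


/-- For `1 < k < n`, the `(n-k)(k-1)` degree-2 polynomials
`f_{i,j} := (E_{n-i}^{k}(x_{i+1},…,x_n))^{[j,j+1]}`, for `i ∈ [n-k]` and
`j ∈ [k-1]`, are linearly independent over `F`. -/
theorem esym_restrictions_linearIndependent (F : Type) [Field F] (n k : ℕ)
    (hk : 1 < k) (hkn : k < n) :
    LinearIndependent F (fun p : Fin (n - k) × Fin (k - 1) =>
      NCrestrict (p.2.val + 1) (p.2.val + 2) (esymAbove F n (p.1.val + 1) k)) := by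
  classical
  rw [linearIndependent_iff']
  intro s g hsum p hp
  by_contra hgp
  set ψ : Fin (n-k) × Fin (k-1) → ℕ :=
    fun q => q.2.val * (n - k) + (n - k - 1 - q.1.val) with hψ
  have hne : (s.filter (fun q => g q ≠ 0)).Nonempty :=
    ⟨p, Finset.mem_filter.mpr ⟨hp, hgp⟩⟩
  obtain ⟨q0, hq0, hmax⟩ := Finset.exists_max_image _ ψ hne
  rw [Finset.mem_filter] at hq0
  obtain ⟨hq0s, hq0ne⟩ := hq0
  have hi0 : q0.1.val < n - k := q0.1.isLt
  have hj0 : q0.2.val < k - 1 := q0.2.isLt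
  set u : Fin n := ⟨q0.1.val + q0.2.val + 1, by omega⟩ with hudef
  set v : Fin n := ⟨n - k + q0.2.val + 1, by omega⟩ with hvdef
  have huval : u.val = q0.1.val + q0.2.val + 1 := rfl
  have hvval : v.val = n - k + q0.2.val + 1 := rfl
  have happ : ∑ q ∈ s, g q *
      (NCrestrict (q.2.val+1) (q.2.val+2) (esymAbove F n (q.1.val+1) k)).coeff
        (FreeMonoid.ofList [u, v]) = 0 := by
    have h := congrArg (fun x => x.coeff (FreeMonoid.ofList [u, v])) hsum
    simp only [MonoidAlgebra.coeff_sum, Finsupp.finset_sum_apply, MonoidAlgebra.coeff_smul,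
      MonoidAlgebra.coeff_zero, Finsupp.coe_zero, Pi.zero_apply] at h
    simp only [Finsupp.smul_apply, smul_eq_mul] at h
    exact h
  rw [Finset.sum_eq_single_of_mem q0 hq0s ?side] at happ
  case side =>
    intro q hq hqq0
    by_cases hgq : g q = 0
    · rw [hgq, zero_mul]
    · have hψle := hmax q (Finset.mem_filter.mpr ⟨hq, hgq⟩)
      simp only [hψ] at hψle
      have hq1lt : q.1.val < n - k := q.1.isLt
      have hq2lt : q.2.val < k - 1 := q.2.isLt
      have hzero : (NCrestrict (q.2.val+1) (q.2.val+2) (esymAbove F n (q.1.val+1) k)).coeff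
          (FreeMonoid.ofList [u, v]) = 0 := by
        rw [coeff_restrict]
        suffices hcard0 : ((((Finset.univ : Finset (Fin n)).filter
            (fun x => q.1.val + 1 ≤ x.val)).powersetCard k).filter
            (fun s => ((s.sort (· ≤ ·)).drop q.2.val).take 2 = [u, v])).card = 0 by
          rw [hcard0]; simp
        rw [Finset.card_eq_zero, Finset.filter_eq_empty_iff]
        intro s' hs' hc
        obtain ⟨hb1, hb2⟩ := filter_bounds (by omega) hs' hc
        rcases lt_trichotomy q.2.val q0.2.val with hlt | heq | hgt
        · omega
        · have hq2 : q.2 = q0.2 := Fin.ext heq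
          have hq1 : q.1 ≠ q0.1 := fun h => hqq0 (Prod.ext h hq2)
          have hq1v : q.1.val ≠ q0.1.val := fun h => hq1 (Fin.ext h)
          rw [heq] at hψle
          have hAB := Nat.le_of_add_le_add_left hψle
          omega
        · have hmul : (q0.2.val + 1) * (n - k) ≤ q.2.val * (n - k) :=
            Nat.mul_le_mul_right _ (by omega)
          have h3 : q0.2.val * (n-k) + (n-k) ≤
              q.2.val * (n-k) + (n - k - 1 - q.1.val) := by
            calc q0.2.val * (n-k) + (n-k) = (q0.2.val+1) * (n-k) := by ring
            _ ≤ q.2.val * (n-k) := hmul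
            _ ≤ _ := Nat.le_add_right _ _
          have h5 := Nat.le_of_add_le_add_left (le_trans h3 hψle)
          omega
      rw [hzero, mul_zero]
  have hdiag : (NCrestrict (q0.2.val+1) (q0.2.val+2) (esymAbove F n (q0.1.val+1) k)).coeff
      (FreeMonoid.ofList [u, v]) = 1 := by
    rw [coeff_restrict]
    rw [diag_card k (q0.1.val+1) q0.2.val (by omega) (by omega) (by omega) u v
      (by rw [huval]; omega) (by rw [hvval])]
    norm_cast
  rw [hdiag, mul_one] at happ
  exact hq0ne happ
end
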